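/- arXiv:2401.06870 — 2 statements merged into one kernel-verified Lean document; each statement's English description precedes it below -/
import Mathlib

section
/- Let N ⊴ B₃ with N ≤ PB₃ of finite index and let (m,f) ∈ ℤ × [F₂,F₂]. Then (m,f) satisfies the hexagon relations modulo N if and only if f·θ(f) ∈ N ∩ F₂ and τ²(yᵐf)·τ(yᵐf)·yᵐf ∈ N ∩ F₂, where θ swaps x,y and τ(x) = y, τ(y) = y⁻¹x⁻¹. -/
def braidRel : Set (FreeGroup (Fin 2)) :=
  {FreeGroup.of 0 * FreeGroup.of 1 * FreeGroup.of 0 *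
    (FreeGroup.of 1 * FreeGroup.of 0 * FreeGroup.of 1)⁻¹}

/-- The Artin braid group on 3 strands. -/
abbrev B3 := PresentedGroup braidRel

def σ₁ : B3 := PresentedGroup.of 0
def σ₂ : B3 := PresentedGroup.of 1

/-- The standard projection B₃ → S₃. -/
def ρ : B3 →* Equiv.Perm (Fin 3) :=
  PresentedGroup.toGroup (f := ![Equiv.swap 0 1, Equiv.swap 1 2]) (by
    intro r hr
    simp only [braidRel, Set.mem_singleton_iff] at hr
    subst hr
    simp only [map_mul, map_inv, FreeGroup.lift_apply_of]
    decide)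

/-- The pure braid group on 3 strands. -/
def PB3 : Subgroup B3 := ρ.ker

def c : B3 := (σ₁ * σ₂ * σ₁) ^ 2

abbrev F2 := FreeGroup (Fin 2)
def xx : F2 := FreeGroup.of 0
def yy : F2 := FreeGroup.of 1

/-- The identification of F₂ with ⟨σ₁², σ₂²⟩ ≤ PB₃. -/
def ι : F2 →* B3 := FreeGroup.lift ![σ₁ ^ 2, σ₂ ^ 2]

/-- The pair (m, f) satisfies the two hexagon relations modulo N. -/
def Hex (N : Subgroup B3) [N.Normal] (m : ℤ) (f : F2) : Prop :=
  QuotientGroup.mk' N (σ₁ ^ (2 * m + 1) * (ι f)⁻¹ * σ₂ ^ (2 * m + 1) * ι f) =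
      QuotientGroup.mk' N ((ι f)⁻¹ * σ₁ * σ₂ * (σ₁ ^ 2) ^ (-m) * c ^ m) ∧
  QuotientGroup.mk' N ((ι f)⁻¹ * σ₂ ^ (2 * m + 1) * ι f * σ₁ ^ (2 * m + 1)) =
      QuotientGroup.mk' N (σ₂ * σ₁ * (σ₂ ^ 2) ^ (-m) * c ^ m * ι f)

/-- N_ord: the lcm of the orders of x₁₂N, x₂₃N and cN in B₃/N. -/
noncomputable def Nord (N : Subgroup B3) [N.Normal] : ℕ :=
  Nat.lcm
    (Nat.lcm (orderOf (QuotientGroup.mk' N (σ₁ ^ 2)))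
      (orderOf (QuotientGroup.mk' N (σ₂ ^ 2))))
    (orderOf (QuotientGroup.mk' N c))

/-- The endomorphism E_{m,f} of F₂. -/
def Emap (m : ℤ) (f : F2) : F2 →* F2 :=
  FreeGroup.lift ![xx ^ (2 * m + 1), f⁻¹ * yy ^ (2 * m + 1) * f]

/-- [m, f] is a GT-shadow with target N and kernel (source) K. -/
def IsShadow (K N : Subgroup B3) [N.Normal] (m : ℤ) (f : F2) : Prop :=
  Hex N m f ∧
  (∃ g ∈ commutator F2, g⁻¹ * f ∈ N.comap ι) ∧
  IsUnit ((2 * m + 1 : ℤ) : ZMod (Nord N)) ∧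
  ∃ T : B3 →* B3 ⧸ N,
    T σ₁ = QuotientGroup.mk' N (σ₁ ^ (2 * m + 1)) ∧
    T σ₂ = QuotientGroup.mk' N ((ι f)⁻¹ * σ₂ ^ (2 * m + 1) * ι f) ∧
    Function.Surjective T ∧
    T.ker = K

/-- [m, f] is a GT-shadow with target N (with unspecified source). -/
def IsShadowTgt (N : Subgroup B3) [N.Normal] (m : ℤ) (f : F2) : Prop :=
  ∃ K : Subgroup B3, IsShadow K N m f

/-- The swap automorphism θ of F₂. -/
def θ : F2 →* F2 := FreeGroup.lift ![yy, xx]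

/-- The automorphism τ of F₂ with τ(x) = y, τ(y) = y⁻¹x⁻¹. -/
def τ : F2 →* F2 := FreeGroup.lift ![yy, yy⁻¹ * xx⁻¹]




section HexAux

/-! ### Generic group-theoretic lemmas -/

variable {Γ : Type*} [Group Γ]

private theorem conj_eq_iff' (d x y : Γ) : x = y ↔ d*x*d⁻¹ = d*y*d⁻¹ := by
  constructor
  · intro h; rw [h]
  · intro h; have := mul_right_cancel h; exact mul_left_cancel this

private theorem GL1 (α β Φ P Q Z : Γ)
    (hbr : α*β*α = β*α*β)
    (hQ : (α*β*α)*Q = P*(α*β*α))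
    (hZP : Z*P = P*Z) (hZΦ : Z*Φ = Φ*Z)
    (h1 : P*Φ⁻¹*Q*Φ = Φ⁻¹*(α*β)*(α*P⁻¹)*Z)
    (h2 : Φ⁻¹*Q*Φ*P = β*α*(β*Q⁻¹)*Z*Φ) :
    (α*β*α)*Φ*(α*β*α)⁻¹ = Φ⁻¹ := by
  have e1 : Φ⁻¹*Q*Φ*P = P⁻¹*(Φ⁻¹*(α*β)*(α*P⁻¹)*Z)*P := by
    rw [show Φ⁻¹*Q*Φ*P = P⁻¹*(P*Φ⁻¹*Q*Φ)*P from by group, h1]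
  have id1 : P⁻¹*(Φ⁻¹*(α*β)*(α*P⁻¹)*Z)*P = P⁻¹*Φ⁻¹*(α*β*α)*Z := by
    rw [show P⁻¹*(Φ⁻¹*(α*β)*(α*P⁻¹)*Z)*P = P⁻¹*Φ⁻¹*(α*β)*α*P⁻¹*(Z*P) from by group, hZP]
    group
  have e3 : β*α*(β*Q⁻¹)*Z*Φ = P⁻¹*Φ⁻¹*(α*β*α)*Z := by
    rw [← h2]; rw [e1, id1]
  have id2 : β*α*(β*Q⁻¹)*Z*Φ = (α*β*α)*Q⁻¹*Φ*Z := by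
    rw [show β*α*(β*Q⁻¹)*Z*Φ = (β*α*β)*Q⁻¹*(Z*Φ) from by group, hZΦ, ← hbr]; group
  have e5 : (α*β*α)*Q⁻¹*Φ*Z = P⁻¹*Φ⁻¹*(α*β*α)*Z := by rw [← id2]; exact e3
  have e6 : (α*β*α)*Q⁻¹*Φ = P⁻¹*Φ⁻¹*(α*β*α) := mul_right_cancel e5
  have e9 : (α*β*α)*Φ = Φ⁻¹*(α*β*α) := by
    rw [show (α*β*α)*Φ = ((α*β*α)*Q)*(Q⁻¹*Φ) from by group, hQ,
      show (P*(α*β*α))*(Q⁻¹*Φ) = P*((α*β*α)*Q⁻¹*Φ) from by group, e6]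
    group
  rw [show (α*β*α)*Φ*(α*β*α)⁻¹ = ((α*β*α)*Φ)*(α*β*α)⁻¹ from by group, e9]; group

private theorem GL2 (α β Φ P Q Z : Γ)
    (hbr : α*β*α = β*α*β)
    (hP : (α*β*α)*P = Q*(α*β*α))
    (hQ : (α*β*α)*Q = P*(α*β*α))
    (hZΔ : Z*(α*β*α) = (α*β*α)*Z)
    (hU : (α*β*α)*Φ*(α*β*α)⁻¹ = Φ⁻¹) :
    (Φ⁻¹*Q*Φ*P = β*α*(β*Q⁻¹)*Z*Φ) ↔ (P*Φ⁻¹*Q*Φ = Φ⁻¹*(α*β)*(α*P⁻¹)*Z) := by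
  have uΔΦ : (α*β*α)*Φ = Φ⁻¹*(α*β*α) := by rw [← hU]; group
  have uΔΦi : (α*β*α)*Φ⁻¹ = Φ*(α*β*α) := by
    rw [show Φ*(α*β*α) = Φ*((α*β*α)*Φ)*Φ⁻¹ from by group, uΔΦ]; group
  have hDα : (α*β*α)*α = β*(α*β*α) := by
    rw [show β*(α*β*α) = (β*α*β)*α from by group, ← hbr]
  have hDβ : (α*β*α)*β = α*(α*β*α) := by
    rw [show (α*β*α)*β = α*(β*α*β) from by group, ← hbr]
  have hQi : (α*β*α)*Q⁻¹ = P⁻¹*(α*β*α) := by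
    rw [show (α*β*α)*Q⁻¹ = P⁻¹*((P*(α*β*α))*Q⁻¹) from by group, ← hQ]; group
  have idL : (α*β*α)*(Φ⁻¹*Q*Φ*P)*(α*β*α)⁻¹ = Φ*P*Φ⁻¹*Q := by
    rw [show (α*β*α)*(Φ⁻¹*Q*Φ*P)*(α*β*α)⁻¹
        = ((α*β*α)*Φ⁻¹)*Q*Φ*P*(α*β*α)⁻¹ from by group, uΔΦi,
      show Φ*(α*β*α)*Q*Φ*P*(α*β*α)⁻¹ = Φ*((α*β*α)*Q)*Φ*P*(α*β*α)⁻¹ from by group, hQ,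
      show Φ*(P*(α*β*α))*Φ*P*(α*β*α)⁻¹ = Φ*P*((α*β*α)*Φ)*P*(α*β*α)⁻¹ from by group, uΔΦ,
      show Φ*P*(Φ⁻¹*(α*β*α))*P*(α*β*α)⁻¹ = Φ*P*Φ⁻¹*((α*β*α)*P)*(α*β*α)⁻¹ from by group, hP]
    group
  have idR : (α*β*α)*(β*α*(β*Q⁻¹)*Z*Φ)*(α*β*α)⁻¹ = (α*β)*(α*P⁻¹)*Z*Φ⁻¹ := by
    rw [show (α*β*α)*(β*α*(β*Q⁻¹)*Z*Φ)*(α*β*α)⁻¹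
        = ((α*β*α)*β)*α*β*Q⁻¹*Z*Φ*(α*β*α)⁻¹ from by group, hDβ,
      show α*(α*β*α)*α*β*Q⁻¹*Z*Φ*(α*β*α)⁻¹
        = α*((α*β*α)*α)*β*Q⁻¹*Z*Φ*(α*β*α)⁻¹ from by group, hDα,
      show α*(β*(α*β*α))*β*Q⁻¹*Z*Φ*(α*β*α)⁻¹
        = α*β*((α*β*α)*β)*Q⁻¹*Z*Φ*(α*β*α)⁻¹ from by group, hDβ,
      show α*β*(α*(α*β*α))*Q⁻¹*Z*Φ*(α*β*α)⁻¹
        = α*β*α*((α*β*α)*Q⁻¹)*Z*Φ*(α*β*α)⁻¹ from by group, hQi,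
      show α*β*α*(P⁻¹*(α*β*α))*Z*Φ*(α*β*α)⁻¹
        = α*β*α*P⁻¹*((α*β*α)*Z)*Φ*(α*β*α)⁻¹ from by group, ← hZΔ,
      show α*β*α*P⁻¹*(Z*(α*β*α))*Φ*(α*β*α)⁻¹
        = α*β*α*P⁻¹*Z*((α*β*α)*Φ)*(α*β*α)⁻¹ from by group, uΔΦ]
    group
  rw [conj_eq_iff' (α*β*α) (Φ⁻¹*Q*Φ*P), idL, idR]
  constructor
  · intro h
    rw [show P*Φ⁻¹*Q*Φ = Φ⁻¹*(Φ*P*Φ⁻¹*Q)*Φ from by group, h]; group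
  · intro h
    rw [show Φ*P*Φ⁻¹*Q = Φ*(P*Φ⁻¹*Q*Φ)*Φ⁻¹ from by group, h]; group

private theorem GL3 (α β Φ P Q Z : Γ)
    (hbr : α*β*α = β*α*β)
    (hQ : (α*β*α)*Q = P*(α*β*α))
    (hAP : (α*β)*P = Q*(α*β))
    (hZΔ : Z*(α*β*α) = (α*β*α)*Z)
    (hU : (α*β*α)*Φ*(α*β*α)⁻¹ = Φ⁻¹) :
    (P*Φ⁻¹*Q*Φ = Φ⁻¹*(α*β)*(α*P⁻¹)*Z) ↔
      ((α*β)*(α*β)*(Q*β⁻¹*Φ)*(α*β)⁻¹*(Q*β⁻¹*Φ)*(α*β)⁻¹*(Q*β⁻¹*Φ)*Z⁻¹ = 1) := by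
  have uΔiΦi : (α*β*α)⁻¹*Φ⁻¹ = Φ*(α*β*α)⁻¹ := by rw [← hU]; group
  have uΔΦ : (α*β*α)*Φ = Φ⁻¹*(α*β*α) := by rw [← hU]; group
  have uΔiΦ : (α*β*α)⁻¹*Φ = Φ⁻¹*(α*β*α)⁻¹ := by
    rw [show Φ⁻¹*(α*β*α)⁻¹ = Φ⁻¹*((α*β*α)⁻¹*Φ⁻¹)*Φ from by group, uΔiΦi]; group
  have hAPi : (α*β)⁻¹*Q = P*(α*β)⁻¹ := by
    rw [show (α*β)⁻¹*Q = (α*β)⁻¹*(Q*(α*β))*(α*β)⁻¹ from by group, ← hAP]; group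
  have hQiA : Q⁻¹*(α*β) = (α*β)*P⁻¹ := by
    rw [show Q⁻¹*(α*β) = Q⁻¹*((α*β)*P)*P⁻¹ from by group, hAP]; group
  have iB : (α*β*α)⁻¹*P = Q*(α*β*α)⁻¹ := by
    rw [show (α*β*α)⁻¹*P = (α*β*α)⁻¹*(P*(α*β*α))*(α*β*α)⁻¹ from by group, ← hQ]; group
  have hDD : (α*β*α)*(α*β*α) = (α*β)*(α*β)*(α*β) := by
    rw [show (α*β*α)*(α*β*α) = (α*(β*α))*(α*β*α) from by group, hbr]; group
  have hZDD : Z*((α*β)*(α*β)*(α*β)) = ((α*β)*(α*β)*(α*β))*Z := by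
    rw [← hDD, show Z*((α*β*α)*(α*β*α)) = (Z*(α*β*α))*(α*β*α) from by group, hZΔ,
      show ((α*β*α)*Z)*(α*β*α) = (α*β*α)*(Z*(α*β*α)) from by group, hZΔ]; group
  have hZDDi : Z*((α*β)*(α*β)*(α*β))⁻¹ = ((α*β)*(α*β)*(α*β))⁻¹*Z := by
    rw [show Z*((α*β)*(α*β)*(α*β))⁻¹
        = ((α*β)*(α*β)*(α*β))⁻¹*(((α*β)*(α*β)*(α*β))*Z)*((α*β)*(α*β)*(α*β))⁻¹ from by group,
      ← hZDD]; group
  have iA : (α*β)⁻¹*(Q*β⁻¹*Φ) = P*(Φ⁻¹*(α*β*α)⁻¹) := by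
    rw [show (α*β)⁻¹*(Q*β⁻¹*Φ) = ((α*β)⁻¹*Q)*(β⁻¹*Φ) from by group, hAPi,
      show (P*(α*β)⁻¹)*(β⁻¹*Φ) = P*((β*α*β)⁻¹*Φ) from by group, ← hbr, uΔiΦ]
  have main : (α*β)*(α*β)*(Q*β⁻¹*Φ)*(α*β)⁻¹*(Q*β⁻¹*Φ)*(α*β)⁻¹*(Q*β⁻¹*Φ)*Z⁻¹
      = (α*β)*(α*β)*(Q*β⁻¹)*(Φ*P*Φ⁻¹*Q*Φ)*((α*β)*(α*β)*(α*β))⁻¹*Z⁻¹ := by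
    rw [show (α*β)*(α*β)*(Q*β⁻¹*Φ)*(α*β)⁻¹*(Q*β⁻¹*Φ)*(α*β)⁻¹*(Q*β⁻¹*Φ)*Z⁻¹
        = (α*β)*(α*β)*(Q*β⁻¹*Φ)*((α*β)⁻¹*(Q*β⁻¹*Φ))*((α*β)⁻¹*(Q*β⁻¹*Φ))*Z⁻¹ from by group,
      iA,
      show (α*β)*(α*β)*(Q*β⁻¹*Φ)*(P*(Φ⁻¹*(α*β*α)⁻¹))*(P*(Φ⁻¹*(α*β*α)⁻¹))*Z⁻¹
        = (α*β)*(α*β)*(Q*β⁻¹)*(Φ*P*Φ⁻¹)*((α*β*α)⁻¹*P)*(Φ⁻¹*(α*β*α)⁻¹)*Z⁻¹ from by group,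
      iB,
      show (α*β)*(α*β)*(Q*β⁻¹)*(Φ*P*Φ⁻¹)*(Q*(α*β*α)⁻¹)*(Φ⁻¹*(α*β*α)⁻¹)*Z⁻¹
        = (α*β)*(α*β)*(Q*β⁻¹)*(Φ*P*Φ⁻¹)*Q*((α*β*α)⁻¹*Φ⁻¹)*(α*β*α)⁻¹*Z⁻¹ from by group,
      uΔiΦi,
      show (α*β)*(α*β)*(Q*β⁻¹)*(Φ*P*Φ⁻¹)*Q*(Φ*(α*β*α)⁻¹)*(α*β*α)⁻¹*Z⁻¹
        = (α*β)*(α*β)*(Q*β⁻¹)*(Φ*P*Φ⁻¹*Q*Φ)*((α*β*α)*(α*β*α))⁻¹*Z⁻¹ from by group, hDD]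
  rw [main]
  constructor
  · intro h1
    have W : Φ*P*Φ⁻¹*Q*Φ = (α*β)*(α*P⁻¹)*Z := by
      rw [show Φ*P*Φ⁻¹*Q*Φ = Φ*(P*Φ⁻¹*Q*Φ) from by group, h1]; group
    rw [W,
      show (α*β)*(α*β)*(Q*β⁻¹)*((α*β)*(α*P⁻¹)*Z)*((α*β)*(α*β)*(α*β))⁻¹*Z⁻¹
        = (α*β)*(α*β)*Q*(β⁻¹*(α*β*α))*P⁻¹*(Z*((α*β)*(α*β)*(α*β))⁻¹)*Z⁻¹ from by group,
      hZDDi, hbr,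
      show (α*β)*(α*β)*Q*(β⁻¹*(β*α*β))*P⁻¹*(((α*β)*(α*β)*(α*β))⁻¹*Z)*Z⁻¹
        = (α*β)*(α*β)*(Q*(α*β))*P⁻¹*((α*β)*(α*β)*(α*β))⁻¹ from by group,
      ← hAP]
    group
  · intro h
    have hW : Φ*P*Φ⁻¹*Q*Φ = β*Q⁻¹*(α*β)⁻¹*(α*β)⁻¹*(Z*((α*β)*(α*β)*(α*β))) := by
      rw [show Φ*P*Φ⁻¹*Q*Φ
          = (β*Q⁻¹*(α*β)⁻¹*(α*β)⁻¹)*((α*β)*(α*β)*(Q*β⁻¹)*(Φ*P*Φ⁻¹*Q*Φ)*((α*β)*(α*β)*(α*β))⁻¹*Z⁻¹)*(Z*((α*β)*(α*β)*(α*β))) from by group,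
        h]; group
    have id4 : β*Q⁻¹*(α*β)⁻¹*(α*β)⁻¹*(Z*((α*β)*(α*β)*(α*β))) = (α*β)*(α*P⁻¹)*Z := by
      rw [hZDD,
        show β*Q⁻¹*(α*β)⁻¹*(α*β)⁻¹*(((α*β)*(α*β)*(α*β))*Z) = β*(Q⁻¹*(α*β))*Z from by group,
        hQiA,
        show β*((α*β)*P⁻¹)*Z = (β*α*β)*P⁻¹*Z from by group, ← hbr]
      group
    rw [show P*Φ⁻¹*Q*Φ = Φ⁻¹*(Φ*P*Φ⁻¹*Q*Φ) from by group, hW, id4]; group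

end HexAux

section B3Aux

/-! ### Braid-group specific lemmas -/

theorem braid : σ₁ * σ₂ * σ₁ = σ₂ * σ₁ * σ₂ := by
  have h : (QuotientGroup.mk (FreeGroup.of 0 * FreeGroup.of 1 * FreeGroup.of 0 *
      (FreeGroup.of 1 * FreeGroup.of 0 * FreeGroup.of 1)⁻¹ : FreeGroup (Fin 2)) : B3) = 1 := by
    rw [QuotientGroup.eq_one_iff]
    exact Subgroup.subset_normalClosure rfl
  have h2 : (σ₁ * σ₂ * σ₁) * (σ₂ * σ₁ * σ₂)⁻¹ = 1 := by
    exact h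
  exact mul_inv_eq_one.mp h2

theorem conjDa : (σ₁*σ₂*σ₁)*σ₁ = σ₂*(σ₁*σ₂*σ₁) := by
  rw [show σ₂*(σ₁*σ₂*σ₁) = (σ₂*σ₁*σ₂)*σ₁ from by group, ← braid]

theorem conjDb : (σ₁*σ₂*σ₁)*σ₂ = σ₁*(σ₁*σ₂*σ₁) := by
  rw [show (σ₁*σ₂*σ₁)*σ₂ = σ₁*(σ₂*σ₁*σ₂) from by group, ← braid]

theorem c_eq : c = (σ₁*σ₂*σ₁)*(σ₁*σ₂*σ₁) := by rw [c, pow_two]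

theorem c_comm_s1 : c * σ₁ = σ₁ * c := by
  rw [c_eq, show (σ₁*σ₂*σ₁)*(σ₁*σ₂*σ₁)*σ₁ = (σ₁*σ₂*σ₁)*((σ₁*σ₂*σ₁)*σ₁) from by group, conjDa,
    show (σ₁*σ₂*σ₁)*(σ₂*(σ₁*σ₂*σ₁)) = ((σ₁*σ₂*σ₁)*σ₂)*(σ₁*σ₂*σ₁) from by group, conjDb]
  group

theorem c_comm_s2 : c * σ₂ = σ₂ * c := by
  rw [c_eq, show (σ₁*σ₂*σ₁)*(σ₁*σ₂*σ₁)*σ₂ = (σ₁*σ₂*σ₁)*((σ₁*σ₂*σ₁)*σ₂) from by group, conjDb,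
    show (σ₁*σ₂*σ₁)*(σ₁*(σ₁*σ₂*σ₁)) = ((σ₁*σ₂*σ₁)*σ₁)*(σ₁*σ₂*σ₁) from by group, conjDa]
  group

theorem c_comm (g : B3) : c * g = g * c := by
  have hle2 : Subgroup.closure (Set.range (PresentedGroup.of : Fin 2 → B3))
      ≤ Subgroup.centralizer {c} := by
    rw [Subgroup.closure_le]
    rintro x ⟨i, rfl⟩
    rw [SetLike.mem_coe, Subgroup.mem_centralizer_iff]
    rintro y (rfl : y = c)
    fin_cases i
    · exact c_comm_s1
    · exact c_comm_s2
  have hg : g ∈ Subgroup.centralizer {c} := by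
    apply hle2
    rw [PresentedGroup.closure_range_of]
    trivial
  exact hg c rfl

theorem conjD_x : (σ₁*σ₂*σ₁)*(σ₁^2)*(σ₁*σ₂*σ₁)⁻¹ = σ₂^2 := by
  rw [pow_two, pow_two,
    show (σ₁*σ₂*σ₁)*(σ₁*σ₁)*(σ₁*σ₂*σ₁)⁻¹ = ((σ₁*σ₂*σ₁)*σ₁)*σ₁*(σ₁*σ₂*σ₁)⁻¹ from by group,
    conjDa, show (σ₂*(σ₁*σ₂*σ₁))*σ₁*(σ₁*σ₂*σ₁)⁻¹ = σ₂*((σ₁*σ₂*σ₁)*σ₁)*(σ₁*σ₂*σ₁)⁻¹ from by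
      group, conjDa]
  group

theorem conjD_y : (σ₁*σ₂*σ₁)*(σ₂^2)*(σ₁*σ₂*σ₁)⁻¹ = σ₁^2 := by
  rw [pow_two, pow_two,
    show (σ₁*σ₂*σ₁)*(σ₂*σ₂)*(σ₁*σ₂*σ₁)⁻¹ = ((σ₁*σ₂*σ₁)*σ₂)*σ₂*(σ₁*σ₂*σ₁)⁻¹ from by group,
    conjDb, show (σ₁*(σ₁*σ₂*σ₁))*σ₂*(σ₁*σ₂*σ₁)⁻¹ = σ₁*((σ₁*σ₂*σ₁)*σ₂)*(σ₁*σ₂*σ₁)⁻¹ from by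
      group, conjDb]
  group

theorem iota_theta (w : F2) : ι (θ w) = (σ₁*σ₂*σ₁) * ι w * (σ₁*σ₂*σ₁)⁻¹ := by
  have key : ι.comp θ = ((MulAut.conj (σ₁*σ₂*σ₁)).toMonoidHom).comp ι := by
    apply FreeGroup.ext_hom
    intro i
    fin_cases i
    · show (ι.comp θ) (FreeGroup.of 0)
        = (((MulAut.conj (σ₁*σ₂*σ₁)).toMonoidHom).comp ι) (FreeGroup.of 0)
      have e1 : (ι.comp θ) (FreeGroup.of 0) = σ₂^2 := by
        simp [θ, ι, yy, FreeGroup.lift_apply_of]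
      have e2 : (((MulAut.conj (σ₁*σ₂*σ₁)).toMonoidHom).comp ι) (FreeGroup.of 0)
          = (σ₁*σ₂*σ₁) * σ₁^2 * (σ₁*σ₂*σ₁)⁻¹ := by
        simp [ι, FreeGroup.lift_apply_of, MulAut.conj_apply]
        group
      rw [e1, e2, conjD_x]
    · show (ι.comp θ) (FreeGroup.of 1)
        = (((MulAut.conj (σ₁*σ₂*σ₁)).toMonoidHom).comp ι) (FreeGroup.of 1)
      have e1 : (ι.comp θ) (FreeGroup.of 1) = σ₁^2 := by
        simp [θ, ι, xx, FreeGroup.lift_apply_of]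
      have e2 : (((MulAut.conj (σ₁*σ₂*σ₁)).toMonoidHom).comp ι) (FreeGroup.of 1)
          = (σ₁*σ₂*σ₁) * σ₂^2 * (σ₁*σ₂*σ₁)⁻¹ := by
        simp [ι, FreeGroup.lift_apply_of, MulAut.conj_apply]
        group
      rw [e1, e2, conjD_y]
  have h := DFunLike.congr_fun key w
  simp only [MonoidHom.comp_apply, MulEquiv.toMonoidHom_eq_coe, MonoidHom.coe_coe,
    MulAut.conj_apply] at h
  rw [h]

theorem conjAa : (σ₁*σ₂)*σ₁ = σ₂*(σ₁*σ₂) := by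
  rw [show σ₂*(σ₁*σ₂) = σ₂*σ₁*σ₂ from by group, ← braid]

theorem conjA_x : (σ₁*σ₂)*(σ₁^2)*(σ₁*σ₂)⁻¹ = σ₂^2 := by
  rw [pow_two, pow_two,
    show (σ₁*σ₂)*(σ₁*σ₁)*(σ₁*σ₂)⁻¹ = ((σ₁*σ₂)*σ₁)*σ₁*(σ₁*σ₂)⁻¹ from by group,
    conjAa, show (σ₂*(σ₁*σ₂))*σ₁*(σ₁*σ₂)⁻¹ = σ₂*((σ₁*σ₂)*σ₁)*(σ₁*σ₂)⁻¹ from by group, conjAa]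
  group

theorem Kconj : σ₁*(σ₂*σ₂)*σ₁⁻¹ = σ₂⁻¹*(σ₁*σ₁)*σ₂ := by
  rw [show σ₂⁻¹*(σ₁*σ₁)*σ₂ = σ₂⁻¹*σ₁*(σ₁*σ₂*σ₁)*σ₁⁻¹ from by group, braid,
    show σ₂⁻¹*σ₁*(σ₂*σ₁*σ₂)*σ₁⁻¹ = σ₂⁻¹*(σ₁*σ₂*σ₁)*σ₂*σ₁⁻¹ from by group, braid]
  group

theorem Mc : c = σ₁*σ₁*σ₂*σ₁*σ₁*σ₂ := by
  rw [show σ₁*σ₁*σ₂*σ₁*σ₁*σ₂ = σ₁*((σ₁*σ₂*σ₁)*(σ₁*σ₂)) from by group, braid, c_eq,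
    show (σ₁*σ₂*σ₁)*(σ₁*σ₂*σ₁) = (σ₁*(σ₂*σ₁))*(σ₁*σ₂*σ₁) from by group, braid]
  group

theorem conjA_y : (σ₁*σ₂)*(σ₂^2)*(σ₁*σ₂)⁻¹ = (σ₂^2)⁻¹*(σ₁^2)⁻¹*c := by
  rw [pow_two, pow_two, show (σ₁*σ₂)*(σ₂*σ₂)*(σ₁*σ₂)⁻¹ = σ₁*(σ₂*σ₂)*σ₁⁻¹ from by group,
    Kconj, Mc]
  group

/-- exponent-sum in the second generator -/
def Shom : F2 →* Multiplicative ℤ :=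
  FreeGroup.lift ![(1 : Multiplicative ℤ), Multiplicative.ofAdd 1]

/-- the twisted homomorphism w ↦ ι(τ w)·c^(S w) -/
def ψ : F2 →* B3 :=
  MonoidHom.mk' (fun w => ι (τ w) * c ^ (Multiplicative.toAdd (Shom w))) (by
    intro u v
    have hc : Commute c (ι (τ v)) := c_comm (ι (τ v))
    simp only [map_mul, toAdd_mul, zpow_add]
    rw [show ι (τ u) * ι (τ v) * (c ^ Multiplicative.toAdd (Shom u) *
          c ^ Multiplicative.toAdd (Shom v))
        = ι (τ u) * (ι (τ v) * c ^ Multiplicative.toAdd (Shom u)) *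
          c ^ Multiplicative.toAdd (Shom v) from by group,
      ← (hc.zpow_left (Multiplicative.toAdd (Shom u))).eq]
    group)

theorem iota_tau (w : F2) :
    (σ₁*σ₂) * ι w * (σ₁*σ₂)⁻¹ = ι (τ w) * c ^ (Multiplicative.toAdd (Shom w)) := by
  have key : ((MulAut.conj (σ₁*σ₂)).toMonoidHom).comp ι = ψ := by
    apply FreeGroup.ext_hom
    intro i
    fin_cases i
    · show (((MulAut.conj (σ₁*σ₂)).toMonoidHom).comp ι) (FreeGroup.of 0) = ψ (FreeGroup.of 0)
      have e1 : (((MulAut.conj (σ₁*σ₂)).toMonoidHom).comp ι) (FreeGroup.of 0)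
          = (σ₁*σ₂) * σ₁^2 * (σ₁*σ₂)⁻¹ := by
        simp [ι, FreeGroup.lift_apply_of, MulAut.conj_apply]; group
      have e2 : ψ (FreeGroup.of 0) = σ₂^2 := by
        show ι (τ (FreeGroup.of 0)) * c ^ (Multiplicative.toAdd (Shom (FreeGroup.of 0))) = σ₂^2
        simp [τ, ι, Shom, yy, FreeGroup.lift_apply_of]
      rw [e1, e2, conjA_x]
    · show (((MulAut.conj (σ₁*σ₂)).toMonoidHom).comp ι) (FreeGroup.of 1) = ψ (FreeGroup.of 1)
      have e1 : (((MulAut.conj (σ₁*σ₂)).toMonoidHom).comp ι) (FreeGroup.of 1)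
          = (σ₁*σ₂) * σ₂^2 * (σ₁*σ₂)⁻¹ := by
        simp [ι, FreeGroup.lift_apply_of, MulAut.conj_apply]; group
      have e2 : ψ (FreeGroup.of 1) = (σ₂^2)⁻¹*(σ₁^2)⁻¹*c := by
        show ι (τ (FreeGroup.of 1)) * c ^ (Multiplicative.toAdd (Shom (FreeGroup.of 1))) =
          (σ₂^2)⁻¹*(σ₁^2)⁻¹*c
        simp [τ, ι, Shom, yy, xx, FreeGroup.lift_apply_of]
      rw [e1, e2, conjA_y]
  have h := DFunLike.congr_fun key w
  simp only [MonoidHom.comp_apply, MulEquiv.toMonoidHom_eq_coe, MonoidHom.coe_coe,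
    MulAut.conj_apply] at h
  exact h.trans rfl

theorem Shom_yy : Shom yy = Multiplicative.ofAdd 1 := by simp [Shom, yy, FreeGroup.lift_apply_of]

theorem Shom_tau_yy : Shom (τ yy) = Multiplicative.ofAdd (-1) := by
  rw [show τ yy = yy⁻¹ * xx⁻¹ from by simp [τ, yy, FreeGroup.lift_apply_of], map_mul, map_inv,
    map_inv, Shom_yy, show Shom xx = 1 from by simp [Shom, xx, FreeGroup.lift_apply_of]]
  simp [← ofAdd_neg]

theorem S_g (m : ℤ) {f : F2} (hf : f ∈ commutator F2) :
    Multiplicative.toAdd (Shom (yy ^ m * f)) = m := by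
  have hSf : Shom f = 1 := MonoidHom.mem_ker.mp (Abelianization.commutator_subset_ker Shom hf)
  rw [map_mul, map_zpow, hSf, mul_one, Shom_yy, toAdd_zpow]
  simp

theorem S_taug (m : ℤ) {f : F2} (hf : f ∈ commutator F2) :
    Multiplicative.toAdd (Shom (τ (yy ^ m * f))) = -m := by
  have h1 : (Shom.comp τ) f = 1 :=
    MonoidHom.mem_ker.mp (Abelianization.commutator_subset_ker (Shom.comp τ) hf)
  rw [MonoidHom.comp_apply] at h1
  rw [map_mul, map_zpow, map_mul, map_zpow, h1, mul_one, Shom_tau_yy, toAdd_zpow]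
  simp

end B3Aux

/-- For (m,f) ∈ ℤ × [F₂,F₂], the hexagon relations modulo N are equivalent to
the simplified hexagon relations f θ(f) ∈ N ∩ F₂ and
τ²(yᵐf)·τ(yᵐf)·yᵐf ∈ N ∩ F₂. -/
theorem hexagon_iff_simplified (N : Subgroup B3) [N.Normal] (hfin : N.FiniteIndex)
    (hle : N ≤ PB3) (m : ℤ) (f : F2) (hf : f ∈ commutator F2) :
    Hex N m f ↔
      (f * θ f ∈ N.comap ι ∧
        τ (τ (yy ^ m * f)) * τ (yy ^ m * f) * (yy ^ m * f) ∈ N.comap ι) := by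
  classical
  -- ι-values
  have hyy : ι yy = σ₂ ^ 2 := by simp [ι, yy, FreeGroup.lift_apply_of]
  -- expansion of ι on the triple element, at the level of B3
  have hg3 : ι (yy ^ m * f) = (σ₂ ^ 2) ^ m * ι f := by rw [map_mul, map_zpow, hyy]
  have ht1 : ι (τ (yy ^ m * f)) = (σ₁*σ₂)*((σ₂ ^ 2) ^ m * ι f)*(σ₁*σ₂)⁻¹*c^(-m) := by
    have h0 := iota_tau (yy ^ m * f)
    rw [S_g m hf] at h0
    rw [← hg3,
      show (σ₁*σ₂)*(ι (yy ^ m * f))*(σ₁*σ₂)⁻¹*c^(-m)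
        = ((σ₁*σ₂) * ι (yy ^ m * f) * (σ₁*σ₂)⁻¹)*c^(-m) from by group, h0]
    group
  have ht2 : ι (τ (τ (yy ^ m * f)))
      = (σ₁*σ₂)*((σ₁*σ₂)*((σ₂ ^ 2) ^ m * ι f)*(σ₁*σ₂)⁻¹*c^(-m))*(σ₁*σ₂)⁻¹*c^m := by
    have h0 := iota_tau (τ (yy ^ m * f))
    rw [S_taug m hf] at h0
    rw [← ht1,
      show (σ₁*σ₂)*(ι (τ (yy ^ m * f)))*(σ₁*σ₂)⁻¹*c^m
        = ((σ₁*σ₂) * ι (τ (yy ^ m * f)) * (σ₁*σ₂)⁻¹)*c^m from by group, h0]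
    group
  have tB3 : ι (τ (τ (yy ^ m * f)) * τ (yy ^ m * f) * (yy ^ m * f))
      = ((σ₁*σ₂)*((σ₁*σ₂)*((σ₂ ^ 2) ^ m * ι f)*(σ₁*σ₂)⁻¹*c^(-m))*(σ₁*σ₂)⁻¹*c^m)
        * ((σ₁*σ₂)*((σ₂ ^ 2) ^ m * ι f)*(σ₁*σ₂)⁻¹*c^(-m)) * ((σ₂ ^ 2) ^ m * ι f) := by
    rw [map_mul, map_mul, ht2, ht1, hg3]
  -- commutation facts in the quotient
  have hCa : ((QuotientGroup.mk' N) c) * ((QuotientGroup.mk' N) σ₁) = ((QuotientGroup.mk' N) σ₁) * ((QuotientGroup.mk' N) c) := by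
    have h := congrArg (QuotientGroup.mk' N) (c_comm σ₁)
    simp only [map_mul] at h; exact h
  have hCb : ((QuotientGroup.mk' N) c) * ((QuotientGroup.mk' N) σ₂) = ((QuotientGroup.mk' N) σ₂) * ((QuotientGroup.mk' N) c) := by
    have h := congrArg (QuotientGroup.mk' N) (c_comm σ₂)
    simp only [map_mul] at h; exact h
  have hCf : ((QuotientGroup.mk' N) c) * ((QuotientGroup.mk' N) (ι f)) = ((QuotientGroup.mk' N) (ι f)) * ((QuotientGroup.mk' N) c) := by
    have h := congrArg (QuotientGroup.mk' N) (c_comm (ι f))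
    simp only [map_mul] at h; exact h
  have hCac : Commute ((QuotientGroup.mk' N) c) ((QuotientGroup.mk' N) σ₁) := hCa
  have hCbc : Commute ((QuotientGroup.mk' N) c) ((QuotientGroup.mk' N) σ₂) := hCb
  have hCfc : Commute ((QuotientGroup.mk' N) c) ((QuotientGroup.mk' N) (ι f)) := hCf
  -- braid in the quotient
  have hbrQ : ((QuotientGroup.mk' N) σ₁)*((QuotientGroup.mk' N) σ₂)*((QuotientGroup.mk' N) σ₁) = ((QuotientGroup.mk' N) σ₂)*((QuotientGroup.mk' N) σ₁)*((QuotientGroup.mk' N) σ₂) := by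
    have h := congrArg (QuotientGroup.mk' N) braid
    simp only [map_mul] at h; exact h
  -- semiconjugation data
  have sc1 : SemiconjBy (((QuotientGroup.mk' N) σ₁)*((QuotientGroup.mk' N) σ₂)*((QuotientGroup.mk' N) σ₁)) ((QuotientGroup.mk' N) σ₁) ((QuotientGroup.mk' N) σ₂) := by
    show (((QuotientGroup.mk' N) σ₁)*((QuotientGroup.mk' N) σ₂)*((QuotientGroup.mk' N) σ₁))*((QuotientGroup.mk' N) σ₁) = ((QuotientGroup.mk' N) σ₂)*(((QuotientGroup.mk' N) σ₁)*((QuotientGroup.mk' N) σ₂)*((QuotientGroup.mk' N) σ₁))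
    rw [show ((QuotientGroup.mk' N) σ₂)*(((QuotientGroup.mk' N) σ₁)*((QuotientGroup.mk' N) σ₂)*((QuotientGroup.mk' N) σ₁)) = (((QuotientGroup.mk' N) σ₂)*((QuotientGroup.mk' N) σ₁)*((QuotientGroup.mk' N) σ₂))*((QuotientGroup.mk' N) σ₁) from by group, ← hbrQ]
  have sc2 : SemiconjBy (((QuotientGroup.mk' N) σ₁)*((QuotientGroup.mk' N) σ₂)*((QuotientGroup.mk' N) σ₁)) ((QuotientGroup.mk' N) σ₂) ((QuotientGroup.mk' N) σ₁) := by
    show (((QuotientGroup.mk' N) σ₁)*((QuotientGroup.mk' N) σ₂)*((QuotientGroup.mk' N) σ₁))*((QuotientGroup.mk' N) σ₂) = ((QuotientGroup.mk' N) σ₁)*(((QuotientGroup.mk' N) σ₁)*((QuotientGroup.mk' N) σ₂)*((QuotientGroup.mk' N) σ₁))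
    rw [show (((QuotientGroup.mk' N) σ₁)*((QuotientGroup.mk' N) σ₂)*((QuotientGroup.mk' N) σ₁))*((QuotientGroup.mk' N) σ₂) = ((QuotientGroup.mk' N) σ₁)*(((QuotientGroup.mk' N) σ₂)*((QuotientGroup.mk' N) σ₁)*((QuotientGroup.mk' N) σ₂)) from by group, ← hbrQ]
  have sc3 : SemiconjBy (((QuotientGroup.mk' N) σ₁)*((QuotientGroup.mk' N) σ₂)) ((QuotientGroup.mk' N) σ₁) ((QuotientGroup.mk' N) σ₂) := by
    show (((QuotientGroup.mk' N) σ₁)*((QuotientGroup.mk' N) σ₂))*((QuotientGroup.mk' N) σ₁) = ((QuotientGroup.mk' N) σ₂)*(((QuotientGroup.mk' N) σ₁)*((QuotientGroup.mk' N) σ₂))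
    rw [show ((QuotientGroup.mk' N) σ₂)*(((QuotientGroup.mk' N) σ₁)*((QuotientGroup.mk' N) σ₂)) = ((QuotientGroup.mk' N) σ₂)*((QuotientGroup.mk' N) σ₁)*((QuotientGroup.mk' N) σ₂) from by group, ← hbrQ]
  have hPQ : (((QuotientGroup.mk' N) σ₁)*((QuotientGroup.mk' N) σ₂)*((QuotientGroup.mk' N) σ₁))*(((QuotientGroup.mk' N) σ₁) ^ (2 * m + 1)) = (((QuotientGroup.mk' N) σ₂) ^ (2 * m + 1))*(((QuotientGroup.mk' N) σ₁)*((QuotientGroup.mk' N) σ₂)*((QuotientGroup.mk' N) σ₁)) := sc1.zpow_right (2*m+1)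
  have hQQ : (((QuotientGroup.mk' N) σ₁)*((QuotientGroup.mk' N) σ₂)*((QuotientGroup.mk' N) σ₁))*(((QuotientGroup.mk' N) σ₂) ^ (2 * m + 1)) = (((QuotientGroup.mk' N) σ₁) ^ (2 * m + 1))*(((QuotientGroup.mk' N) σ₁)*((QuotientGroup.mk' N) σ₂)*((QuotientGroup.mk' N) σ₁)) := sc2.zpow_right (2*m+1)
  have hAPQ : (((QuotientGroup.mk' N) σ₁)*((QuotientGroup.mk' N) σ₂))*(((QuotientGroup.mk' N) σ₁) ^ (2 * m + 1)) = (((QuotientGroup.mk' N) σ₂) ^ (2 * m + 1))*(((QuotientGroup.mk' N) σ₁)*((QuotientGroup.mk' N) σ₂)) := sc3.zpow_right (2*m+1)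
  have hZP : (((QuotientGroup.mk' N) c) ^ m)*(((QuotientGroup.mk' N) σ₁) ^ (2 * m + 1)) = (((QuotientGroup.mk' N) σ₁) ^ (2 * m + 1))*(((QuotientGroup.mk' N) c) ^ m) := ((hCac.zpow_left m).zpow_right (2*m+1)).eq
  have hZF : (((QuotientGroup.mk' N) c) ^ m)*((QuotientGroup.mk' N) (ι f)) = ((QuotientGroup.mk' N) (ι f))*(((QuotientGroup.mk' N) c) ^ m) := (hCfc.zpow_left m).eq
  have hZD : (((QuotientGroup.mk' N) c) ^ m)*(((QuotientGroup.mk' N) σ₁)*((QuotientGroup.mk' N) σ₂)*((QuotientGroup.mk' N) σ₁)) = (((QuotientGroup.mk' N) σ₁)*((QuotientGroup.mk' N) σ₂)*((QuotientGroup.mk' N) σ₁))*(((QuotientGroup.mk' N) c) ^ m) :=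
    (((hCac.mul_right hCbc).mul_right hCac).zpow_left m).eq
  -- conversion of the first hexagon equation
  have l1 : (QuotientGroup.mk' N) (σ₁ ^ (2 * m + 1) * (ι f)⁻¹ * σ₂ ^ (2 * m + 1) * ι f)
      = (((QuotientGroup.mk' N) σ₁) ^ (2 * m + 1))*((QuotientGroup.mk' N) (ι f))⁻¹*(((QuotientGroup.mk' N) σ₂) ^ (2 * m + 1))*((QuotientGroup.mk' N) (ι f)) := by
    simp only [map_mul, map_inv, map_zpow]
  have r1 : (QuotientGroup.mk' N) ((ι f)⁻¹ * σ₁ * σ₂ * (σ₁ ^ 2) ^ (-m) * c ^ m)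
      = ((QuotientGroup.mk' N) (ι f))⁻¹*(((QuotientGroup.mk' N) σ₁)*((QuotientGroup.mk' N) σ₂))*(((QuotientGroup.mk' N) σ₁)*(((QuotientGroup.mk' N) σ₁) ^ (2 * m + 1))⁻¹)*(((QuotientGroup.mk' N) c) ^ m) := by
    simp only [map_mul, map_inv, map_zpow, map_pow]
    rw [← zpow_natCast ((QuotientGroup.mk' N) σ₁) 2]
    group
  have hiff1 : ((QuotientGroup.mk' N) (σ₁ ^ (2 * m + 1) * (ι f)⁻¹ * σ₂ ^ (2 * m + 1) * ι f)
        = (QuotientGroup.mk' N) ((ι f)⁻¹ * σ₁ * σ₂ * (σ₁ ^ 2) ^ (-m) * c ^ m))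
      ↔ ((((QuotientGroup.mk' N) σ₁) ^ (2 * m + 1))*((QuotientGroup.mk' N) (ι f))⁻¹*(((QuotientGroup.mk' N) σ₂) ^ (2 * m + 1))*((QuotientGroup.mk' N) (ι f)) = ((QuotientGroup.mk' N) (ι f))⁻¹*(((QuotientGroup.mk' N) σ₁)*((QuotientGroup.mk' N) σ₂))*(((QuotientGroup.mk' N) σ₁)*(((QuotientGroup.mk' N) σ₁) ^ (2 * m + 1))⁻¹)*(((QuotientGroup.mk' N) c) ^ m)) := by
    rw [l1, r1]
  -- conversion of the second hexagon equation
  have l2 : (QuotientGroup.mk' N) ((ι f)⁻¹ * σ₂ ^ (2 * m + 1) * ι f * σ₁ ^ (2 * m + 1))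
      = ((QuotientGroup.mk' N) (ι f))⁻¹*(((QuotientGroup.mk' N) σ₂) ^ (2 * m + 1))*((QuotientGroup.mk' N) (ι f))*(((QuotientGroup.mk' N) σ₁) ^ (2 * m + 1)) := by
    simp only [map_mul, map_inv, map_zpow]
  have r2 : (QuotientGroup.mk' N) (σ₂ * σ₁ * (σ₂ ^ 2) ^ (-m) * c ^ m * ι f)
      = ((QuotientGroup.mk' N) σ₂)*((QuotientGroup.mk' N) σ₁)*(((QuotientGroup.mk' N) σ₂)*(((QuotientGroup.mk' N) σ₂) ^ (2 * m + 1))⁻¹)*(((QuotientGroup.mk' N) c) ^ m)*((QuotientGroup.mk' N) (ι f)) := by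
    simp only [map_mul, map_inv, map_zpow, map_pow]
    rw [← zpow_natCast ((QuotientGroup.mk' N) σ₂) 2]
    group
  have hiff2 : ((QuotientGroup.mk' N) ((ι f)⁻¹ * σ₂ ^ (2 * m + 1) * ι f * σ₁ ^ (2 * m + 1))
        = (QuotientGroup.mk' N) (σ₂ * σ₁ * (σ₂ ^ 2) ^ (-m) * c ^ m * ι f))
      ↔ (((QuotientGroup.mk' N) (ι f))⁻¹*(((QuotientGroup.mk' N) σ₂) ^ (2 * m + 1))*((QuotientGroup.mk' N) (ι f))*(((QuotientGroup.mk' N) σ₁) ^ (2 * m + 1)) = ((QuotientGroup.mk' N) σ₂)*((QuotientGroup.mk' N) σ₁)*(((QuotientGroup.mk' N) σ₂)*(((QuotientGroup.mk' N) σ₂) ^ (2 * m + 1))⁻¹)*(((QuotientGroup.mk' N) c) ^ m)*((QuotientGroup.mk' N) (ι f))) := by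
    rw [l2, r2]
  -- conversion of the first membership condition
  have m1eq : (QuotientGroup.mk' N) (ι (f * θ f))
      = ((QuotientGroup.mk' N) (ι f)) * (((QuotientGroup.mk' N) σ₁)*((QuotientGroup.mk' N) σ₂)*((QuotientGroup.mk' N) σ₁)*((QuotientGroup.mk' N) (ι f))*(((QuotientGroup.mk' N) σ₁)*((QuotientGroup.mk' N) σ₂)*((QuotientGroup.mk' N) σ₁))⁻¹) := by
    rw [map_mul, iota_theta f]
    simp only [map_mul, map_inv]
  have hiffm1 : (f * θ f ∈ N.comap ι) ↔ (((QuotientGroup.mk' N) σ₁)*((QuotientGroup.mk' N) σ₂)*((QuotientGroup.mk' N) σ₁)*((QuotientGroup.mk' N) (ι f))*(((QuotientGroup.mk' N) σ₁)*((QuotientGroup.mk' N) σ₂)*((QuotientGroup.mk' N) σ₁))⁻¹ = ((QuotientGroup.mk' N) (ι f))⁻¹) := by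
    rw [Subgroup.mem_comap, ← QuotientGroup.eq_one_iff (ι (f * θ f)),
      show ((ι (f * θ f) : B3 ⧸ N)) = (QuotientGroup.mk' N) (ι (f * θ f)) from rfl, m1eq,
      mul_eq_one_iff_inv_eq, eq_comm]
  -- conversion of the second membership condition
  have m2eq : (QuotientGroup.mk' N) (ι (τ (τ (yy ^ m * f)) * τ (yy ^ m * f) * (yy ^ m * f)))
      = (((QuotientGroup.mk' N) σ₁)*((QuotientGroup.mk' N) σ₂))*(((QuotientGroup.mk' N) σ₁)*((QuotientGroup.mk' N) σ₂))*((((QuotientGroup.mk' N) σ₂) ^ (2 * m + 1))*((QuotientGroup.mk' N) σ₂)⁻¹*((QuotientGroup.mk' N) (ι f)))*(((QuotientGroup.mk' N) σ₁)*((QuotientGroup.mk' N) σ₂))⁻¹*((((QuotientGroup.mk' N) σ₂) ^ (2 * m + 1))*((QuotientGroup.mk' N) σ₂)⁻¹*((QuotientGroup.mk' N) (ι f)))*(((QuotientGroup.mk' N) σ₁)*((QuotientGroup.mk' N) σ₂))⁻¹*((((QuotientGroup.mk' N) σ₂) ^ (2 * m + 1))*((QuotientGroup.mk' N) σ₂)⁻¹*((QuotientGroup.mk'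 N) (ι f)))*(((QuotientGroup.mk' N) c) ^ m)⁻¹ := by
    rw [tB3]
    simp only [map_mul, map_inv, map_zpow, map_pow]
    rw [show (((QuotientGroup.mk' N) σ₁)*((QuotientGroup.mk' N) σ₂))*((((QuotientGroup.mk' N) σ₁)*((QuotientGroup.mk' N) σ₂))*((((QuotientGroup.mk' N) σ₂) ^ 2) ^ m * ((QuotientGroup.mk' N) (ι f)))*(((QuotientGroup.mk' N) σ₁)*((QuotientGroup.mk' N) σ₂))⁻¹*((QuotientGroup.mk' N) c)^(-m))*(((QuotientGroup.mk' N) σ₁)*((QuotientGroup.mk' N) σ₂))⁻¹*((QuotientGroup.mk' N) c)^m*((((QuotientGroup.mk' N) σ₁)*((QuotientGroup.mk' N) σ₂))*((((QuotientGroup.mk' N) σ₂) ^ 2) ^ m * ((QuotientGroup.mk' N) (ι f)))*(((QuotientGroup.mk' N) σ₁)*((QuotientGroup.mk' N) σ₂))⁻¹*((QuotientGroup.mk' N) c)^(-m))*((((QuotientGroup.mk' N) σ₂) ^ 2) ^ m * ((QuotientGroup.mk' N) (ι f)))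
        = (((QuotientGroup.mk' N) σ₁)*((QuotientGroup.mk' N) σ₂))*((((QuotientGroup.mk' N) σ₁)*((QuotientGroup.mk' N) σ₂))*((((QuotientGroup.mk' N) σ₂) ^ 2) ^ m * ((QuotientGroup.mk' N) (ι f)))*(((QuotientGroup.mk' N) σ₁)*((QuotientGroup.mk' N) σ₂))⁻¹)*(((QuotientGroup.mk' N) c)^(-m)*(((QuotientGroup.mk' N) σ₁)*((QuotientGroup.mk' N) σ₂))⁻¹)*((QuotientGroup.mk' N) c)^m*((((QuotientGroup.mk' N) σ₁)*((QuotientGroup.mk' N) σ₂))*((((QuotientGroup.mk' N) σ₂) ^ 2) ^ m * ((QuotientGroup.mk' N) (ι f)))*(((QuotientGroup.mk' N) σ₁)*((QuotientGroup.mk' N) σ₂))⁻¹)*(((QuotientGroup.mk' N) c)^(-m)*((((QuotientGroup.mk' N) σ₂) ^ 2) ^ m * ((QuotientGroup.mk' N) (ι f))))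
          from by group,
      ((hCac.mul_right hCbc).zpow_left (-m)).inv_right.eq,
      ((((hCbc.pow_right 2).zpow_right m).mul_right hCfc).zpow_left (-m)).eq,
      ← zpow_natCast ((QuotientGroup.mk' N) σ₂) 2]
    group
  have hiffm2 : (τ (τ (yy ^ m * f)) * τ (yy ^ m * f) * (yy ^ m * f) ∈ N.comap ι)
      ↔ ((((QuotientGroup.mk' N) σ₁)*((QuotientGroup.mk' N) σ₂))*(((QuotientGroup.mk' N) σ₁)*((QuotientGroup.mk' N) σ₂))*((((QuotientGroup.mk' N) σ₂) ^ (2 * m + 1))*((QuotientGroup.mk' N) σ₂)⁻¹*((QuotientGroup.mk' N) (ι f)))*(((QuotientGroup.mk' N) σ₁)*((QuotientGroup.mk' N) σ₂))⁻¹*((((QuotientGroup.mk' N) σ₂) ^ (2 * m + 1))*((QuotientGroup.mk' N) σ₂)⁻¹*((QuotientGroup.mk' N) (ι f)))*(((QuotientGroup.mk' N) σ₁)*((QuotientGroup.mk' N) σ₂))⁻¹*((((QuotientGroup.mk' N) σ₂) ^ (2 * m + 1))*((QuotientGroup.mk' N) σ₂)⁻¹*((QuotientGroup.mk' N) (ι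 f)))*(((QuotientGroup.mk' N) c) ^ m)⁻¹ = 1) := by
    rw [Subgroup.mem_comap,
      ← QuotientGroup.eq_one_iff (ι (τ (τ (yy ^ m * f)) * τ (yy ^ m * f) * (yy ^ m * f))),
      show ((ι (τ (τ (yy ^ m * f)) * τ (yy ^ m * f) * (yy ^ m * f)) : B3 ⧸ N))
        = (QuotientGroup.mk' N) (ι (τ (τ (yy ^ m * f)) * τ (yy ^ m * f) * (yy ^ m * f)))
        from rfl, m2eq]
  -- put everything together
  unfold Hex
  rw [hiff1, hiff2, hiffm1, hiffm2]
  constructor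
  · rintro ⟨h1, h2⟩
    have hU := GL1 ((QuotientGroup.mk' N) σ₁) ((QuotientGroup.mk' N) σ₂) ((QuotientGroup.mk' N) (ι f)) (((QuotientGroup.mk' N) σ₁) ^ (2 * m + 1)) (((QuotientGroup.mk' N) σ₂) ^ (2 * m + 1)) (((QuotientGroup.mk' N) c) ^ m) hbrQ hQQ hZP hZF h1 h2
    exact ⟨hU, (GL3 ((QuotientGroup.mk' N) σ₁) ((QuotientGroup.mk' N) σ₂) ((QuotientGroup.mk' N) (ι f)) (((QuotientGroup.mk' N) σ₁) ^ (2 * m + 1)) (((QuotientGroup.mk' N) σ₂) ^ (2 * m + 1)) (((QuotientGroup.mk' N) c) ^ m) hbrQ hQQ hAPQ hZD hU).mp h1⟩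
  · rintro ⟨hU, hT⟩
    have h1 := (GL3 ((QuotientGroup.mk' N) σ₁) ((QuotientGroup.mk' N) σ₂) ((QuotientGroup.mk' N) (ι f)) (((QuotientGroup.mk' N) σ₁) ^ (2 * m + 1)) (((QuotientGroup.mk' N) σ₂) ^ (2 * m + 1)) (((QuotientGroup.mk' N) c) ^ m) hbrQ hQQ hAPQ hZD hU).mpr hT
    exact ⟨h1, (GL2 ((QuotientGroup.mk' N) σ₁) ((QuotientGroup.mk' N) σ₂) ((QuotientGroup.mk' N) (ι f)) (((QuotientGroup.mk' N) σ₁) ^ (2 * m + 1)) (((QuotientGroup.mk' N) σ₂) ^ (2 * m + 1)) (((QuotientGroup.mk' N) c) ^ m) hbrQ hPQ hQQ hZD hU).mpr h1⟩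
end

section
/- GT-shadows form a groupoid GTSh: objects are finite-index normal subgroups of B₃ contained in PB₃; morphisms from K to N are GT-shadows [m,f] with target N and ker(T_{m,f}) = K; composition is [m₁,f₁]∘[m₂,f₂] = [2m₁m₂+m₁+m₂, f₁E_{m₁,f₁}(f₂)]; the identity at N is [0,1]; and every morphism [m,f] ∈ GTSh(K,N) has an inverse [m̃,f̃] ∈ GTSh(N,K) determined by (2m+1)(2m̃+1) ≡ 1 mod 2N_ord and T^{F₂,isom}_{m,f}(f̃ K_{F₂}) = f⁻¹N_{F₂}. -/
theorem semi1 : (σ₁ * σ₂ * σ₁) * σ₁ = σ₂ * (σ₁ * σ₂ * σ₁) :=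
  calc (σ₁ * σ₂ * σ₁) * σ₁ = (σ₂ * σ₁ * σ₂) * σ₁ := by rw [braid]
  _ = σ₂ * (σ₁ * σ₂ * σ₁) := by (try simp only [pow_two]); group

theorem semi2 : (σ₁ * σ₂ * σ₁) * σ₂ = σ₁ * (σ₁ * σ₂ * σ₁) :=
  calc (σ₁ * σ₂ * σ₁) * σ₂ = σ₁ * (σ₂ * σ₁ * σ₂) := by (try simp only [pow_two]); group
  _ = σ₁ * (σ₁ * σ₂ * σ₁) := by rw [braid]

theorem semi1z (k : ℤ) : (σ₁ * σ₂ * σ₁) * σ₁ ^ k = σ₂ ^ k * (σ₁ * σ₂ * σ₁) :=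
  (SemiconjBy.zpow_right semi1 k)

theorem semi2z (k : ℤ) : (σ₁ * σ₂ * σ₁) * σ₂ ^ k = σ₁ ^ k * (σ₁ * σ₂ * σ₁) :=
  (SemiconjBy.zpow_right semi2 k)

theorem comm_c_σ₁ : Commute c σ₁ := by
  unfold c
  rw [sq]
  calc (σ₁*σ₂*σ₁) * (σ₁*σ₂*σ₁) * σ₁ = (σ₁*σ₂*σ₁) * ((σ₁*σ₂*σ₁) * σ₁) := by (try simp only [pow_two]); group
  _ = (σ₁*σ₂*σ₁) * (σ₂ * (σ₁*σ₂*σ₁)) := by rw [semi1]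
  _ = ((σ₁*σ₂*σ₁) * σ₂) * (σ₁*σ₂*σ₁) := by (try simp only [pow_two]); group
  _ = (σ₁ * (σ₁*σ₂*σ₁)) * (σ₁*σ₂*σ₁) := by rw [semi2]
  _ = σ₁ * ((σ₁*σ₂*σ₁) * (σ₁*σ₂*σ₁)) := by (try simp only [pow_two]); group

theorem comm_c_σ₂ : Commute c σ₂ := by
  unfold c
  rw [sq]
  calc (σ₁*σ₂*σ₁) * (σ₁*σ₂*σ₁) * σ₂ = (σ₁*σ₂*σ₁) * ((σ₁*σ₂*σ₁) * σ₂) := by (try simp only [pow_two]); group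
  _ = (σ₁*σ₂*σ₁) * (σ₁ * (σ₁*σ₂*σ₁)) := by rw [semi2]
  _ = ((σ₁*σ₂*σ₁) * σ₁) * (σ₁*σ₂*σ₁) := by (try simp only [pow_two]); group
  _ = (σ₂ * (σ₁*σ₂*σ₁)) * (σ₁*σ₂*σ₁) := by rw [semi1]
  _ = σ₂ * ((σ₁*σ₂*σ₁) * (σ₁*σ₂*σ₁)) := by (try simp only [pow_two]); group

theorem c_central (g : B3) : Commute c g := by
  induction g using PresentedGroup.induction_on with
  | H z =>
    induction z using FreeGroup.induction_on with
    | C1 => exact Commute.one_right c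
    | of i =>
      fin_cases i
      · exact comm_c_σ₁
      · exact comm_c_σ₂
    | inv_of i h => exact h.inv_right
    | mul x y hx hy => rw [map_mul]; exact hx.mul_right hy

theorem kid1 (k : ℤ) : σ₁ * σ₂ * σ₁ ^ (2*k+2) * σ₂ * σ₁ * σ₂ ^ (-(2*k)) = c := by
  have h1 : σ₁ ^ (2*k+2) = σ₁ ^ (2*k+1) * σ₁ := by
    rw [← zpow_add_one]; congr 1; ring
  rw [h1]
  calc σ₁ * σ₂ * (σ₁ ^ (2*k+1) * σ₁) * σ₂ * σ₁ * σ₂ ^ (-(2*k))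
      = σ₁ * σ₂ * σ₁ ^ (2*k+1) * ((σ₁ * σ₂ * σ₁) * σ₂ ^ (-(2*k))) := by (try simp only [pow_two]); group
    _ = σ₁ * σ₂ * σ₁ ^ (2*k+1) * (σ₁ ^ (-(2*k)) * (σ₁ * σ₂ * σ₁)) := by rw [semi2z]
    _ = (σ₁ * σ₂ * (σ₁ ^ (2*k+1) * σ₁ ^ (-(2*k)))) * (σ₁ * σ₂ * σ₁) := by (try simp only [pow_two]); group
    _ = (σ₁ * σ₂ * σ₁ ^ (1:ℤ)) * (σ₁ * σ₂ * σ₁) := by rw [← zpow_add, show (2*k+1) + (-(2*k)) = (1:ℤ) from by ring]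
    _ = c := by unfold c; rw [sq]; (try simp only [pow_two]); group

-- c = σ₁σ₂σ₁²σ₂σ₁ (pure associativity)
theorem cE1 : c = σ₁ * σ₂ * σ₁^2 * σ₂ * σ₁ := by unfold c; rw [sq]; (try simp only [pow_two]); group

theorem cE2 : c = σ₂ * σ₁^2 * σ₂ * σ₁^2 := by
  have := c_central σ₁
  calc c = σ₁⁻¹ * (c * σ₁) := by rw [this.eq]; (try simp only [pow_two]); group
  _ = σ₁⁻¹ * ((σ₁ * σ₂ * σ₁^2 * σ₂ * σ₁) * σ₁) := by rw [← cE1]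
  _ = σ₂ * σ₁^2 * σ₂ * σ₁^2 := by (try simp only [pow_two]); group

theorem cE1' : c = σ₂ * σ₁ * σ₂^2 * σ₁ * σ₂ := by
  unfold c; rw [braid, sq]; (try simp only [pow_two]); group

theorem cE3 : c = σ₁ * σ₂^2 * σ₁ * σ₂^2 := by
  have := c_central σ₂
  calc c = σ₂⁻¹ * (c * σ₂) := by rw [this.eq]; (try simp only [pow_two]); group
  _ = σ₂⁻¹ * ((σ₂ * σ₁ * σ₂^2 * σ₁ * σ₂) * σ₂) := by rw [← cE1']
  _ = σ₁ * σ₂^2 * σ₁ * σ₂^2 := by (try simp only [pow_two]); group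

theorem conjbb : σ₁ * σ₂^2 * σ₁⁻¹ = c * (σ₂^2)⁻¹ * (σ₁^2)⁻¹ := by
  rw [cE3]; (try simp only [pow_two]); group

theorem conjaa : σ₂ * σ₁^2 * σ₂⁻¹ = c * (σ₁^2)⁻¹ * (σ₂^2)⁻¹ := by
  rw [cE2]; (try simp only [pow_two]); group

theorem id_b : σ₁ * σ₂ * σ₁^2 * σ₂⁻¹ * σ₁⁻¹ = σ₂^2 := by
  have h : σ₁ * σ₂ * σ₁^2 = σ₂^2 * (σ₁ * σ₂) := by
    calc σ₁ * σ₂ * σ₁^2 = (σ₁ * σ₂ * σ₁) * σ₁ := by rw [sq]; (try simp only [pow_two]); group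
    _ = σ₂ * (σ₁ * σ₂ * σ₁) := semi1
    _ = σ₂ * (σ₂ * σ₁ * σ₂) := by rw [braid]
    _ = σ₂^2 * (σ₁ * σ₂) := by rw [sq]; (try simp only [pow_two]); group
  rw [h]; (try simp only [pow_two]); group

theorem id_a : σ₂ * σ₁ * σ₂^2 * σ₁⁻¹ * σ₂⁻¹ = σ₁^2 := by
  have h : σ₂ * σ₁ * σ₂^2 = σ₁^2 * (σ₂ * σ₁) := by
    calc σ₂ * σ₁ * σ₂^2 = (σ₂ * σ₁ * σ₂) * σ₂ := by rw [sq]; (try simp only [pow_two]); group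
    _ = (σ₁ * σ₂ * σ₁) * σ₂ := by rw [braid]
    _ = σ₁ * (σ₁ * σ₂ * σ₁) := semi2
    _ = σ₁^2 * (σ₂ * σ₁) := by rw [sq]; (try simp only [pow_two]); group
  rw [h]; (try simp only [pow_two]); group

/-! ### Reidemeister–Schreier: PB3 = ⟨σ₁², σ₂², c⟩ -/

def H3 : Subgroup B3 := Subgroup.closure {σ₁^2, σ₂^2, c}

theorem aH : σ₁^2 ∈ H3 := Subgroup.subset_closure (by left; rfl)
theorem bH : σ₂^2 ∈ H3 := Subgroup.subset_closure (by right; left; rfl)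
theorem cH : c ∈ H3 := Subgroup.subset_closure (by right; right; rfl)

theorem hbb : σ₁ * σ₂^2 * σ₁⁻¹ ∈ H3 := by
  rw [conjbb]; exact mul_mem (mul_mem cH (inv_mem bH)) (inv_mem aH)

theorem haa : σ₂ * σ₁^2 * σ₂⁻¹ ∈ H3 := by
  rw [conjaa]; exact mul_mem (mul_mem cH (inv_mem aH)) (inv_mem bH)

def U : Set B3 := {g | g ∈ H3 ∨ g*σ₁⁻¹ ∈ H3 ∨ g*σ₂⁻¹ ∈ H3 ∨ g*(σ₁*σ₂)⁻¹ ∈ H3 ∨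
  g*(σ₂*σ₁)⁻¹ ∈ H3 ∨ g*(σ₁*σ₂*σ₁)⁻¹ ∈ H3}

theorem step {t t' : B3} (s : B3) (h : t * s * t'⁻¹ ∈ H3) {g : B3} (hg : g * t⁻¹ ∈ H3) :
    (g * s) * t'⁻¹ ∈ H3 := by
  have e : (g * s) * t'⁻¹ = (g * t⁻¹) * (t * s * t'⁻¹) := by (try simp only [pow_two]); group
  rw [e]; exact mul_mem hg h

theorem step1 {t' : B3} (s : B3) (h : s * t'⁻¹ ∈ H3) {g : B3} (hg : g ∈ H3) :
    (g * s) * t'⁻¹ ∈ H3 := by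
  have e : (g * s) * t'⁻¹ = g * (s * t'⁻¹) := by (try simp only [pow_two]); group
  rw [e]; exact mul_mem hg h

theorem U_mul_σ₁ {g : B3} (hg : g ∈ U) : g * σ₁ ∈ U := by
  rcases hg with h | h | h | h | h | h
  · exact Or.inr (Or.inl (step1 σ₁ (by rw [mul_inv_cancel]; exact one_mem _) h))
  · exact Or.inl (by have e : g * σ₁ = (g * σ₁⁻¹) * σ₁^2 := by (try simp only [pow_two]); group
                     rw [e]; exact mul_mem h aH)
  · refine Or.inr (Or.inr (Or.inr (Or.inr (Or.inl (step σ₁ ?_ h)))))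
    have e : σ₂ * σ₁ * (σ₂*σ₁)⁻¹ = 1 := by (try simp only [pow_two]); group
    rw [e]; exact one_mem _
  · refine Or.inr (Or.inr (Or.inr (Or.inr (Or.inr (step σ₁ ?_ h)))))
    have e : (σ₁*σ₂) * σ₁ * (σ₁*σ₂*σ₁)⁻¹ = 1 := by (try simp only [pow_two]); group
    rw [e]; exact one_mem _
  · refine Or.inr (Or.inr (Or.inl (step σ₁ ?_ h)))
    have e : (σ₂*σ₁) * σ₁ * σ₂⁻¹ = σ₂ * σ₁^2 * σ₂⁻¹ := by (try simp only [pow_two]); group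
    rw [e]; exact haa
  · refine Or.inr (Or.inr (Or.inr (Or.inl (step σ₁ ?_ h))))
    have e : (σ₁*σ₂*σ₁) * σ₁ * (σ₁*σ₂)⁻¹ = σ₂^2 := by rw [← id_b]; (try simp only [pow_two]); group
    rw [e]; exact bH

theorem U_mul_σ₁inv {g : B3} (hg : g ∈ U) : g * σ₁⁻¹ ∈ U := by
  rcases hg with h | h | h | h | h | h
  · exact Or.inr (Or.inl (step1 σ₁⁻¹ (by
      have e : σ₁⁻¹ * σ₁⁻¹ = (σ₁^2)⁻¹ := by (try simp only [pow_two]); group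
      rw [e]; exact inv_mem aH) h))
  · exact Or.inl (by have e : g * σ₁⁻¹ = (g * σ₁⁻¹) * 1 := by (try simp only [pow_two]); group
                     rw [e]; exact mul_mem h (one_mem _))
  · refine Or.inr (Or.inr (Or.inr (Or.inr (Or.inl (step σ₁⁻¹ ?_ h)))))
    have e : σ₂ * σ₁⁻¹ * (σ₂*σ₁)⁻¹ = (σ₂ * σ₁^2 * σ₂⁻¹)⁻¹ := by (try simp only [pow_two]); group
    rw [e]; exact inv_mem haa
  · refine Or.inr (Or.inr (Or.inr (Or.inr (Or.inr (step σ₁⁻¹ ?_ h)))))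
    have e : (σ₁*σ₂) * σ₁⁻¹ * (σ₁*σ₂*σ₁)⁻¹ = (σ₂^2)⁻¹ := by rw [← id_b]; (try simp only [pow_two]); group
    rw [e]; exact inv_mem bH
  · refine Or.inr (Or.inr (Or.inl (step σ₁⁻¹ ?_ h)))
    have e : (σ₂*σ₁) * σ₁⁻¹ * σ₂⁻¹ = 1 := by (try simp only [pow_two]); group
    rw [e]; exact one_mem _
  · refine Or.inr (Or.inr (Or.inr (Or.inl (step σ₁⁻¹ ?_ h))))
    have e : (σ₁*σ₂*σ₁) * σ₁⁻¹ * (σ₁*σ₂)⁻¹ = 1 := by (try simp only [pow_two]); group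
    rw [e]; exact one_mem _

theorem U_mul_σ₂ {g : B3} (hg : g ∈ U) : g * σ₂ ∈ U := by
  rcases hg with h | h | h | h | h | h
  · exact Or.inr (Or.inr (Or.inl (step1 σ₂ (by rw [mul_inv_cancel]; exact one_mem _) h)))
  · refine Or.inr (Or.inr (Or.inr (Or.inl (step σ₂ ?_ h))))
    have e : σ₁ * σ₂ * (σ₁*σ₂)⁻¹ = 1 := by (try simp only [pow_two]); group
    rw [e]; exact one_mem _
  · exact Or.inl (by have e : g * σ₂ = (g * σ₂⁻¹) * σ₂^2 := by (try simp only [pow_two]); group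
                     rw [e]; exact mul_mem h bH)
  · refine Or.inr (Or.inl (step σ₂ ?_ h))
    have e : (σ₁*σ₂) * σ₂ * σ₁⁻¹ = σ₁ * σ₂^2 * σ₁⁻¹ := by (try simp only [pow_two]); group
    rw [e]; exact hbb
  · refine Or.inr (Or.inr (Or.inr (Or.inr (Or.inr (step σ₂ ?_ h)))))
    have e : (σ₂*σ₁) * σ₂ * (σ₁*σ₂*σ₁)⁻¹ = 1 := by rw [← braid]; (try simp only [pow_two]); group
    rw [e]; exact one_mem _
  · refine Or.inr (Or.inr (Or.inr (Or.inr (Or.inl (step σ₂ ?_ h)))))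
    have e : (σ₁*σ₂*σ₁) * σ₂ * (σ₂*σ₁)⁻¹ = σ₁^2 := by
      calc (σ₁*σ₂*σ₁) * σ₂ * (σ₂*σ₁)⁻¹ = (σ₁ * (σ₁*σ₂*σ₁)) * (σ₂*σ₁)⁻¹ := by rw [semi2]
      _ = σ₁^2 := by rw [sq]; (try simp only [pow_two]); group
    rw [e]; exact aH

theorem U_mul_σ₂inv {g : B3} (hg : g ∈ U) : g * σ₂⁻¹ ∈ U := by
  rcases hg with h | h | h | h | h | h
  · exact Or.inr (Or.inr (Or.inl (step1 σ₂⁻¹ (by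
      have e : σ₂⁻¹ * σ₂⁻¹ = (σ₂^2)⁻¹ := by (try simp only [pow_two]); group
      rw [e]; exact inv_mem bH) h)))
  · refine Or.inr (Or.inr (Or.inr (Or.inl (step σ₂⁻¹ ?_ h))))
    have e : σ₁ * σ₂⁻¹ * (σ₁*σ₂)⁻¹ = (σ₁ * σ₂^2 * σ₁⁻¹)⁻¹ := by (try simp only [pow_two]); group
    rw [e]; exact inv_mem hbb
  · exact Or.inl (by have e : g * σ₂⁻¹ = (g * σ₂⁻¹) * 1 := by (try simp only [pow_two]); group
                     rw [e]; exact mul_mem h (one_mem _))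
  · refine Or.inr (Or.inl (step σ₂⁻¹ ?_ h))
    have e : (σ₁*σ₂) * σ₂⁻¹ * σ₁⁻¹ = 1 := by (try simp only [pow_two]); group
    rw [e]; exact one_mem _
  · refine Or.inr (Or.inr (Or.inr (Or.inr (Or.inr (step σ₂⁻¹ ?_ h)))))
    have e : (σ₂*σ₁) * σ₂⁻¹ * (σ₁*σ₂*σ₁)⁻¹ = (σ₁^2)⁻¹ := by
      rw [braid, ← id_a]; (try simp only [pow_two]); group
    rw [e]; exact inv_mem aH
  · refine Or.inr (Or.inr (Or.inr (Or.inr (Or.inl (step σ₂⁻¹ ?_ h)))))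
    have e : (σ₁*σ₂*σ₁) * σ₂⁻¹ * (σ₂*σ₁)⁻¹ = 1 := by rw [braid]; (try simp only [pow_two]); group
    rw [e]; exact one_mem _

theorem B3_eq_U : ∀ g : B3, g ∈ U := by
  have key : ∀ w : FreeGroup (Fin 2), ∀ g ∈ U, g * (PresentedGroup.mk braidRel w) ∈ U := by
    intro w
    induction w using FreeGroup.induction_on with
    | C1 => intro g hg; simpa using hg
    | of i =>
      fin_cases i
      · intro g hg; exact U_mul_σ₁ hg
      · intro g hg; exact U_mul_σ₂ hg
    | inv_of i _ =>
      fin_cases i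
      · intro g hg; rw [map_inv]; exact U_mul_σ₁inv hg
      · intro g hg; rw [map_inv]; exact U_mul_σ₂inv hg
    | mul x y hx hy =>
      intro g hg
      rw [map_mul, ← mul_assoc]
      exact hy _ (hx _ hg)
  intro g
  obtain ⟨w, rfl⟩ := PresentedGroup.mk_surjective braidRel g
  have h1 : (1 : B3) ∈ U := Or.inl (one_mem _)
  simpa using key w 1 h1

theorem ρσ₁ : ρ σ₁ = Equiv.swap 0 1 := by
  show ρ (PresentedGroup.of 0) = _
  rw [ρ, PresentedGroup.toGroup.of]
  rfl

theorem ρσ₂ : ρ σ₂ = Equiv.swap 1 2 := by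
  show ρ (PresentedGroup.of 1) = _
  rw [ρ, PresentedGroup.toGroup.of]
  rfl

theorem H3_le_PB3 : H3 ≤ PB3 := by
  rw [H3, Subgroup.closure_le]
  intro x hx
  rcases hx with h | h | h
  · subst h; show σ₁^2 ∈ ρ.ker
    rw [MonoidHom.mem_ker, map_pow, ρσ₁]; decide
  · subst h; show σ₂^2 ∈ ρ.ker
    rw [MonoidHom.mem_ker, map_pow, ρσ₂]; decide
  · subst h; show c ∈ ρ.ker
    rw [MonoidHom.mem_ker]; unfold c
    rw [map_pow, map_mul, map_mul, ρσ₁, ρσ₂]; decide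

theorem PB3_eq_H3 : PB3 = H3 := by
  apply le_antisymm _ H3_le_PB3
  intro g hg
  have hρg : ρ g = 1 := hg
  rcases B3_eq_U g with h | h | h | h | h | h
  · exact h
  · exfalso
    have := H3_le_PB3 h
    have h2 : ρ (g * σ₁⁻¹) = 1 := this
    rw [map_mul, map_inv, hρg, ρσ₁] at h2
    exact absurd h2 (by decide)
  · exfalso
    have h2 : ρ (g * σ₂⁻¹) = 1 := H3_le_PB3 h
    rw [map_mul, map_inv, hρg, ρσ₂] at h2
    exact absurd h2 (by decide)
  · exfalso
    have h2 : ρ (g * (σ₁*σ₂)⁻¹) = 1 := H3_le_PB3 h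
    rw [map_mul, map_inv, map_mul, hρg, ρσ₁, ρσ₂] at h2
    exact absurd h2 (by decide)
  · exfalso
    have h2 : ρ (g * (σ₂*σ₁)⁻¹) = 1 := H3_le_PB3 h
    rw [map_mul, map_inv, map_mul, hρg, ρσ₁, ρσ₂] at h2
    exact absurd h2 (by decide)
  · exfalso
    have h2 : ρ (g * (σ₁*σ₂*σ₁)⁻¹) = 1 := H3_le_PB3 h
    rw [map_mul, map_inv, map_mul, map_mul, hρg, ρσ₁, ρσ₂] at h2
    exact absurd h2 (by decide)

theorem ρ_surjective : Function.Surjective ρ := by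
  intro g
  have h : g = 1 ∨ g = Equiv.swap (0:Fin 3) 1 ∨ g = Equiv.swap (1:Fin 3) 2 ∨
      g = Equiv.swap (0:Fin 3) 1 * Equiv.swap 1 2 ∨ g = Equiv.swap (1:Fin 3) 2 * Equiv.swap 0 1 ∨
      g = Equiv.swap (0:Fin 3) 1 * Equiv.swap 1 2 * Equiv.swap 0 1 := by
    revert g; decide
  rcases h with rfl | rfl | rfl | rfl | rfl | rfl
  · exact ⟨1, map_one ρ⟩
  · exact ⟨σ₁, ρσ₁⟩
  · exact ⟨σ₂, ρσ₂⟩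
  · exact ⟨σ₁ * σ₂, by rw [map_mul, ρσ₁, ρσ₂]⟩
  · exact ⟨σ₂ * σ₁, by rw [map_mul, ρσ₁, ρσ₂]⟩
  · exact ⟨σ₁ * σ₂ * σ₁, by rw [map_mul, map_mul, ρσ₁, ρσ₂]⟩

/-! ### helper lemmas -/

theorem conj_zpow' {G : Type*} [Group G] (u x : G) (k : ℤ) :
    (u⁻¹ * x * u) ^ k = u⁻¹ * x ^ k * u := by
  simpa [MulAut.conj] using (map_zpow (MulAut.conj u⁻¹).toMonoidHom x k).symm

theorem conj_pow2 {G : Type*} [Group G] (u x : G) :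
    (u⁻¹ * x * u) ^ (2:ℕ) = u⁻¹ * x ^ (2:ℕ) * u := by
  simp only [pow_two]; group

theorem sq_z (x : B3) (k : ℤ) : (x ^ (2:ℕ)) ^ k = x ^ (2 * k) := by
  rw [← zpow_natCast x 2, ← zpow_mul]
  norm_num

theorem z_sq (x : B3) (k : ℤ) : (x ^ k) ^ (2:ℕ) = x ^ (2 * k) := by
  rw [pow_two, ← zpow_add]
  congr 1; ring

theorem orderOf_conj {Q : Type*} [Group Q] (u x : Q) : orderOf (u⁻¹ * x * u) = orderOf x := by
  have h := orderOf_injective (MulAut.conj u⁻¹).toMonoidHom (MulEquiv.injective _) x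
  simpa [MulAut.conj] using h

theorem mv (m : ℤ) (x : B3) : c ^ m * x = x * c ^ m := ((c_central x).zpow_left m).eq

theorem ιx : ι xx = σ₁ ^ 2 := by
  simp only [ι, xx, FreeGroup.lift_apply_of, Matrix.cons_val_zero]

theorem ιy : ι yy = σ₂ ^ 2 := by
  simp only [ι, yy, FreeGroup.lift_apply_of, Matrix.cons_val_one, Matrix.head_cons, Matrix.cons_val_zero]

theorem Emx (m : ℤ) (f : F2) : Emap m f xx = xx ^ (2*m+1) := by
  simp only [Emap, xx, FreeGroup.lift_apply_of, Matrix.cons_val_zero]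

theorem Emy (m : ℤ) (f : F2) : Emap m f yy = f⁻¹ * yy ^ (2*m+1) * f := by
  simp only [Emap, yy, FreeGroup.lift_apply_of, Matrix.cons_val_one, Matrix.head_cons, Matrix.cons_val_zero]

theorem ι_mem_PB3 (w : F2) : ι w ∈ PB3 := by
  induction w using FreeGroup.induction_on with
  | C1 => simpa using PB3.one_mem
  | of i =>
    fin_cases i
    · show ι xx ∈ PB3
      rw [ιx]; exact PB3_eq_H3 ▸ aH
    · show ι yy ∈ PB3
      rw [ιy]; exact PB3_eq_H3 ▸ bH
  | inv_of i h => rw [map_inv]; exact PB3.inv_mem h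
  | mul x y hx hy => rw [map_mul]; exact PB3.mul_mem hx hy

theorem hom_mem_commutator {φ : F2 →* F2} {g : F2} (hg : g ∈ commutator F2) :
    φ g ∈ commutator F2 := by
  have h1 : φ g ∈ Subgroup.map φ (commutator F2) := Subgroup.mem_map_of_mem φ hg
  have h2 : Subgroup.map φ (commutator F2) ≤ commutator F2 := by
    rw [commutator_def, Subgroup.map_commutator]
    exact Subgroup.commutator_mono le_top le_top
  exact h2 h1

section TLemmas

variable {N : Subgroup B3} [N.Normal] {m : ℤ} {f : F2} {T : B3 →* B3 ⧸ N}

theorem T_iota (h1 : T σ₁ = QuotientGroup.mk' N (σ₁ ^ (2*m+1)))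
    (h2 : T σ₂ = QuotientGroup.mk' N ((ι f)⁻¹ * σ₂ ^ (2*m+1) * ι f)) (w : F2) :
    T (ι w) = QuotientGroup.mk' N (ι (Emap m f w)) := by
  have key : T.comp ι = ((QuotientGroup.mk' N).comp ι).comp (Emap m f) := by
    apply FreeGroup.ext_hom
    intro a
    fin_cases a
    · show T (ι xx) = QuotientGroup.mk' N (ι (Emap m f xx))
      calc T (ι xx) = (T σ₁)^2 := by rw [ιx, map_pow]
        _ = QuotientGroup.mk' N ((σ₁^(2*m+1))^(2:ℕ)) := by rw [h1, ← map_pow]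
        _ = QuotientGroup.mk' N (ι (Emap m f xx)) := by
            rw [Emx, map_zpow, ιx, sq_z, z_sq]
    · show T (ι yy) = QuotientGroup.mk' N (ι (Emap m f yy))
      calc T (ι yy) = (T σ₂)^2 := by rw [ιy, map_pow]
        _ = QuotientGroup.mk' N (((ι f)⁻¹ * σ₂^(2*m+1) * ι f)^(2:ℕ)) := by
            rw [h2, ← map_pow]
        _ = QuotientGroup.mk' N (ι (Emap m f yy)) := by
            rw [conj_pow2, z_sq]
            apply congrArg
            rw [Emy, map_mul, map_mul, map_inv, map_zpow, ιy, sq_z]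
  exact DFunLike.congr_fun key w

theorem T_s12 (hex : Hex N m f) (h1 : T σ₁ = QuotientGroup.mk' N (σ₁ ^ (2*m+1)))
    (h2 : T σ₂ = QuotientGroup.mk' N ((ι f)⁻¹ * σ₂ ^ (2*m+1) * ι f)) :
    T (σ₁ * σ₂) = QuotientGroup.mk' N ((ι f)⁻¹ * σ₁ * σ₂ * (σ₁ ^ 2) ^ (-m) * c ^ m) := by
  rw [map_mul, h1, h2, ← map_mul,
    show σ₁^(2*m+1) * ((ι f)⁻¹ * σ₂^(2*m+1) * ι f)
      = σ₁ ^ (2 * m + 1) * (ι f)⁻¹ * σ₂ ^ (2 * m + 1) * ι f from by group]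
  exact hex.1

theorem T_s21 (hex : Hex N m f) (h1 : T σ₁ = QuotientGroup.mk' N (σ₁ ^ (2*m+1)))
    (h2 : T σ₂ = QuotientGroup.mk' N ((ι f)⁻¹ * σ₂ ^ (2*m+1) * ι f)) :
    T (σ₂ * σ₁) = QuotientGroup.mk' N (σ₂ * σ₁ * (σ₂ ^ 2) ^ (-m) * c ^ m * ι f) := by
  rw [map_mul, h2, h1, ← map_mul,
    show ((ι f)⁻¹ * σ₂^(2*m+1) * ι f) * σ₁^(2*m+1)
      = (ι f)⁻¹ * σ₂ ^ (2 * m + 1) * ι f * σ₁ ^ (2 * m + 1) from by group]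
  exact hex.2

theorem word_c (mm : ℤ) (g : B3) :
    (g⁻¹ * σ₁ * σ₂ * (σ₁^2)^(-mm) * c^mm) * (σ₁^(2*mm+1))^(2:ℕ)
      * (σ₂ * σ₁ * (σ₂^2)^(-mm) * c^mm * g) = c^(2*mm+1) := by
  rw [sq_z σ₁, sq_z σ₂, z_sq σ₁]
  calc g⁻¹ * σ₁ * σ₂ * σ₁^(2*(-mm)) * c^mm * σ₁^(2*(2*mm+1))
        * (σ₂ * σ₁ * σ₂^(2*(-mm)) * c^mm * g)
      = g⁻¹ * σ₁ * σ₂ * σ₁^(2*(-mm)) * (c^mm * σ₁^(2*(2*mm+1)))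
        * (σ₂ * σ₁ * σ₂^(2*(-mm)) * c^mm * g) := by group
    _ = g⁻¹ * σ₁ * σ₂ * σ₁^(2*(-mm)) * (σ₁^(2*(2*mm+1)) * c^mm)
        * (σ₂ * σ₁ * σ₂^(2*(-mm)) * c^mm * g) := by rw [mv]
    _ = g⁻¹ * (σ₁ * σ₂ * (σ₁^(2*(-mm)) * σ₁^(2*(2*mm+1))))
        * (c^mm * (σ₂ * σ₁ * σ₂^(2*(-mm)))) * (c^mm * g) := by group
    _ = g⁻¹ * (σ₁ * σ₂ * (σ₁^(2*(-mm)) * σ₁^(2*(2*mm+1))))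
        * ((σ₂ * σ₁ * σ₂^(2*(-mm))) * c^mm) * (c^mm * g) := by rw [mv]
    _ = g⁻¹ * (σ₁ * σ₂ * σ₁^(2*mm+2) * σ₂ * σ₁ * σ₂^(-(2*mm))) * (c^mm * c^mm * g) := by
        group
    _ = g⁻¹ * c * (c^mm * c^mm * g) := by rw [kid1]
    _ = g⁻¹ * (c^(2*mm+1) * g) := by group
    _ = g⁻¹ * (g * c^(2*mm+1)) := by rw [mv]
    _ = c^(2*mm+1) := by group

theorem T_c (hex : Hex N m f) (h1 : T σ₁ = QuotientGroup.mk' N (σ₁ ^ (2*m+1)))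
    (h2 : T σ₂ = QuotientGroup.mk' N ((ι f)⁻¹ * σ₂ ^ (2*m+1) * ι f)) :
    T c = QuotientGroup.mk' N (c ^ (2*m+1)) := by
  have hc : c = (σ₁*σ₂) * σ₁^2 * (σ₂*σ₁) := by
    rw [cE1]; (try simp only [pow_two]); group
  rw [hc, map_mul, map_mul, T_s12 hex h1 h2, T_s21 hex h1 h2, map_pow, h1,
    ← map_pow, ← map_mul, ← map_mul]
  exact congrArg _ (word_c m (ι f))

end TLemmas

theorem zpc {a b : ℤ} (x : B3) (h : a = b) : x ^ a = x ^ b := by rw [h]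

theorem zpow_one_of_dvd {Q : Type*} [Group Q] {y : Q} {n : ℕ} (h : orderOf y ∣ n) {s : ℤ}
    (hs : (n:ℤ) ∣ s) : y ^ s = 1 := by
  obtain ⟨t, rfl⟩ := hs
  rw [zpow_mul, zpow_natCast, orderOf_dvd_iff_pow_eq_one.mp h, one_zpow]

theorem sub_eq_of_le_card {G : Type*} [Group G] {X Y : Subgroup G} [Finite Y] (hle : X ≤ Y)
    (hc : Nat.card Y ≤ Nat.card X) : X = Y := by
  have hcard : Nat.card (X.subgroupOf Y) = Nat.card X :=
    Nat.card_congr (Subgroup.subgroupOfEquivOfLe hle).toEquiv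
  have htop : X.subgroupOf Y = ⊤ :=
    Subgroup.eq_top_of_le_card _ (by rw [hcard]; exact hc)
  exact le_antisymm hle (fun y hy => by
    have : (⟨y, hy⟩ : Y) ∈ X.subgroupOf Y := htop ▸ Subgroup.mem_top _
    exact this)

theorem int_isUnit_coprime {k : ℤ} {n : ℕ} (hn : n ≠ 0) (hu : IsUnit ((k : ZMod n))) :
    Nat.Coprime k.natAbs n := by
  haveI : NeZero n := ⟨hn⟩
  have h : IsUnit ((k.natAbs : ZMod n)) := by
    rcases Int.natAbs_eq k with h | h
    · rw [h, Int.cast_natCast] at hu; exact hu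
    · rw [h, Int.cast_neg, Int.cast_natCast] at hu; simpa using hu.neg
  exact (ZMod.isUnit_iff_coprime _ _).mp h

theorem orderOf_zpow_unit {Q : Type*} [Group Q] (a : Q) {k : ℤ} {n : ℕ} (hn : n ≠ 0)
    (ha : orderOf a ∣ n) (hu : IsUnit ((k : ZMod n))) : orderOf (a ^ k) = orderOf a := by
  have hcop : Nat.Coprime k.natAbs n := int_isUnit_coprime hn hu
  have hcop2 : (orderOf a).Coprime k.natAbs :=
    Nat.Coprime.coprime_dvd_left ha hcop.symm
  rcases Int.natAbs_eq k with h | h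
  · rw [h, zpow_natCast]; exact Nat.Coprime.orderOf_pow hcop2
  · rw [h, zpow_neg, zpow_natCast, orderOf_inv]; exact Nat.Coprime.orderOf_pow hcop2

section NordLemmas

variable (N : Subgroup B3) [N.Normal]

theorem ord1_dvd_nord : orderOf (QuotientGroup.mk' N (σ₁ ^ 2)) ∣ Nord N :=
  dvd_trans (Nat.dvd_lcm_left _ _) (Nat.dvd_lcm_left _ _)

theorem ord2_dvd_nord : orderOf (QuotientGroup.mk' N (σ₂ ^ 2)) ∣ Nord N :=
  dvd_trans (Nat.dvd_lcm_right _ _) (Nat.dvd_lcm_left _ _)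

theorem ordc_dvd_nord : orderOf (QuotientGroup.mk' N c) ∣ Nord N :=
  Nat.dvd_lcm_right _ _

theorem nord_ne_zero [Finite (B3 ⧸ N)] : Nord N ≠ 0 := by
  have h1 := (orderOf_pos (QuotientGroup.mk' N (σ₁ ^ 2))).ne'
  have h2 := (orderOf_pos (QuotientGroup.mk' N (σ₂ ^ 2))).ne'
  have h3 := (orderOf_pos (QuotientGroup.mk' N c)).ne'
  exact Nat.lcm_ne_zero (Nat.lcm_ne_zero h1 h2) h3

theorem q_sig_pow (x : B3) (hdvd : orderOf (QuotientGroup.mk' N (x ^ 2)) ∣ Nord N) {P : ℤ}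
    (h : (2 * (Nord N) : ℤ) ∣ (P - 1)) : QuotientGroup.mk' N (x ^ P) = QuotientGroup.mk' N x := by
  obtain ⟨t, ht⟩ := h
  calc QuotientGroup.mk' N (x ^ P)
      = QuotientGroup.mk' N (x ^ (1:ℤ) * (x ^ 2) ^ ((Nord N : ℤ) * t)) := by
        apply congrArg
        rw [sq_z, ← zpow_add]
        exact zpc x (by linarith)
    _ = QuotientGroup.mk' N x * (QuotientGroup.mk' N (x ^ 2)) ^ ((Nord N : ℤ) * t) := by
        rw [map_mul, map_zpow, map_zpow, zpow_one]
    _ = QuotientGroup.mk' N x := by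
        rw [zpow_one_of_dvd hdvd (dvd_mul_right _ _), mul_one]

theorem q_c_pow {P : ℤ} (h : (2 * (Nord N) : ℤ) ∣ (P - 1)) :
    QuotientGroup.mk' N (c ^ P) = QuotientGroup.mk' N c := by
  obtain ⟨t, ht⟩ := h
  calc QuotientGroup.mk' N (c ^ P)
      = QuotientGroup.mk' N (c ^ (1:ℤ) * c ^ ((Nord N : ℤ) * (2 * t))) := by
        apply congrArg
        rw [← zpow_add]
        exact zpc c (by linarith)
    _ = QuotientGroup.mk' N c * (QuotientGroup.mk' N c) ^ ((Nord N : ℤ) * (2 * t)) := by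
        rw [map_mul, map_zpow, map_zpow, zpow_one]
    _ = QuotientGroup.mk' N c := by
        rw [zpow_one_of_dvd (ordc_dvd_nord N) (dvd_mul_right _ _), mul_one]

end NordLemmas

section LiftLemmas

variable {N K : Subgroup B3} [N.Normal] [K.Normal] {T : B3 →* B3 ⧸ N}

def liftT (T : B3 →* B3 ⧸ N) (hker : T.ker = K) : B3 ⧸ K →* B3 ⧸ N :=
  QuotientGroup.lift K T (fun x hx => MonoidHom.mem_ker.mp (hker.symm ▸ hx))

theorem liftT_mk (hker : T.ker = K) (x : B3) :
    liftT T hker (QuotientGroup.mk' K x) = T x :=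
  QuotientGroup.lift_mk' _ _ _

theorem liftT_inj (hker : T.ker = K) : Function.Injective (liftT T hker) := by
  apply (injective_iff_map_eq_one _).mpr
  intro a ha
  induction a using QuotientGroup.induction_on with
  | H x =>
    have hx : T x = 1 := by rw [← liftT_mk hker x]; exact ha
    have : x ∈ K := hker ▸ MonoidHom.mem_ker.mpr hx
    exact (QuotientGroup.eq_one_iff x).mpr this

theorem liftT_surj (hker : T.ker = K) (hs : Function.Surjective T) :
    Function.Surjective (liftT T hker) := by
  intro y
  obtain ⟨x, hx⟩ := hs y
  exact ⟨QuotientGroup.mk' K x, by rw [liftT_mk]; exact hx⟩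

theorem T_congr (hker : T.ker = K) {u v : B3}
    (h : QuotientGroup.mk' K u = QuotientGroup.mk' K v) : T u = T v := by
  rw [← liftT_mk hker u, ← liftT_mk hker v, h]

theorem nord_eq [Finite (B3 ⧸ N)] {m : ℤ} {f : F2}
    (h1 : T σ₁ = QuotientGroup.mk' N (σ₁ ^ (2*m+1)))
    (h2 : T σ₂ = QuotientGroup.mk' N ((ι f)⁻¹ * σ₂ ^ (2*m+1) * ι f))
    (hex : Hex N m f) (hker : T.ker = K)
    (hu : IsUnit ((2 * m + 1 : ℤ) : ZMod (Nord N))) : Nord K = Nord N := by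
  have hnz : Nord N ≠ 0 := nord_ne_zero N
  have hinj := liftT_inj hker
  have e1 : orderOf (QuotientGroup.mk' K (σ₁ ^ 2)) = orderOf (QuotientGroup.mk' N (σ₁ ^ 2)) := by
    rw [← orderOf_injective (liftT T hker) hinj, liftT_mk]
    have hT : T (σ₁ ^ 2) = (QuotientGroup.mk' N (σ₁ ^ 2)) ^ (2*m+1 : ℤ) := by
      rw [map_pow, h1, ← map_zpow, ← map_pow]
      apply congrArg
      rw [z_sq, sq_z]
    rw [hT, orderOf_zpow_unit _ hnz (ord1_dvd_nord N) hu]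
  have e2 : orderOf (QuotientGroup.mk' K (σ₂ ^ 2)) = orderOf (QuotientGroup.mk' N (σ₂ ^ 2)) := by
    rw [← orderOf_injective (liftT T hker) hinj, liftT_mk]
    have hT : T (σ₂ ^ 2) = (QuotientGroup.mk' N (ι f))⁻¹
        * (QuotientGroup.mk' N (σ₂ ^ 2)) ^ (2*m+1 : ℤ) * (QuotientGroup.mk' N (ι f)) := by
      rw [map_pow, h2, ← map_pow, conj_pow2, z_sq, ← sq_z σ₂ (2*m+1), map_mul, map_mul,
        map_inv, map_zpow]
    rw [hT, orderOf_conj, orderOf_zpow_unit _ hnz (ord2_dvd_nord N) hu]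
  have e3 : orderOf (QuotientGroup.mk' K c) = orderOf (QuotientGroup.mk' N c) := by
    rw [← orderOf_injective (liftT T hker) hinj, liftT_mk, T_c hex h1 h2, map_zpow,
      orderOf_zpow_unit _ hnz (ordc_dvd_nord N) hu]
  rw [Nord, Nord, e1, e2, e3]

end LiftLemmas

open scoped commutatorElement in
theorem comm_central {Q : Type*} [Group Q] {s s' z z' : Q} (hz : ∀ w, z * w = w * z)
    (hz' : ∀ w, z' * w = w * z') : ⁅s*z, s'*z'⁆ = ⁅s, s'⁆ := by
  have e1 : ∀ t : Q, ⁅s*z, t⁆ = ⁅s, t⁆ := by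
    intro t
    rw [commutatorElement_def, commutatorElement_def]
    calc s*z*t*(s*z)⁻¹*t⁻¹ = s*(z*t)*z⁻¹*s⁻¹*t⁻¹ := by group
      _ = s*(t*z)*z⁻¹*s⁻¹*t⁻¹ := by rw [hz t]
      _ = s*t*s⁻¹*t⁻¹ := by group
  have e2 : ∀ t : Q, ⁅t, s'*z'⁆ = ⁅t, s'⁆ := by
    intro t
    rw [commutatorElement_def, commutatorElement_def]
    calc t*(s'*z')*t⁻¹*(s'*z')⁻¹ = t*s'*(z'*t⁻¹)*z'⁻¹*s'⁻¹ := by group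
      _ = t*s'*(t⁻¹*z')*z'⁻¹*s'⁻¹ := by rw [hz' t⁻¹]
      _ = t*s'*t⁻¹*s'⁻¹ := by group
  rw [e1, e2]



/-! ### composition of hexagons -/

theorem wordA (m₁ m₂ : ℤ) (g h : B3) :
    h⁻¹ * (g⁻¹ * σ₁ * σ₂ * (σ₁^2)^(-m₁) * c^m₁) * ((σ₁^(2*m₁+1))^(2:ℕ))^(-m₂)
      * (c^(2*m₁+1))^m₂
    = (g*h)⁻¹ * σ₁ * σ₂ * (σ₁^2)^(-(2*m₁*m₂+m₁+m₂)) * c^(2*m₁*m₂+m₁+m₂) := by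
  rw [z_sq, ← zpow_mul σ₁, ← zpow_mul c, sq_z, sq_z]
  calc h⁻¹ * (g⁻¹ * σ₁ * σ₂ * σ₁^(2*(-m₁)) * c^m₁) * σ₁^(2*(2*m₁+1)*(-m₂)) * c^((2*m₁+1)*m₂)
      = h⁻¹ * g⁻¹ * σ₁ * σ₂ * σ₁^(2*(-m₁)) * (c^m₁ * σ₁^(2*(2*m₁+1)*(-m₂)))
        * c^((2*m₁+1)*m₂) := by group
    _ = h⁻¹ * g⁻¹ * σ₁ * σ₂ * σ₁^(2*(-m₁)) * (σ₁^(2*(2*m₁+1)*(-m₂)) * c^m₁)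
        * c^((2*m₁+1)*m₂) := by rw [mv]
    _ = (g*h)⁻¹ * σ₁ * σ₂ * σ₁^(2*(-(2*m₁*m₂+m₁+m₂))) * c^(2*m₁*m₂+m₁+m₂) := by group

theorem wordB (m₁ m₂ : ℤ) (g h : B3) :
    (σ₂ * σ₁ * (σ₂^2)^(-m₁) * c^m₁ * g) * ((g⁻¹ * σ₂^(2*m₁+1) * g)^(2:ℕ))^(-m₂)
      * (c^(2*m₁+1))^m₂ * h
    = σ₂ * σ₁ * (σ₂^2)^(-(2*m₁*m₂+m₁+m₂)) * c^(2*m₁*m₂+m₁+m₂) * (g*h) := by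
  rw [conj_pow2, conj_zpow', z_sq, ← zpow_mul σ₂, ← zpow_mul c, sq_z, sq_z]
  calc σ₂ * σ₁ * σ₂^(2*(-m₁)) * c^m₁ * g * (g⁻¹ * σ₂^(2*(2*m₁+1)*(-m₂)) * g)
        * c^((2*m₁+1)*m₂) * h
      = σ₂ * σ₁ * σ₂^(2*(-m₁)) * (c^m₁ * σ₂^(2*(2*m₁+1)*(-m₂)))
        * (g * c^((2*m₁+1)*m₂)) * h := by group
    _ = σ₂ * σ₁ * σ₂^(2*(-m₁)) * (σ₂^(2*(2*m₁+1)*(-m₂)) * c^m₁)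
        * (g * c^((2*m₁+1)*m₂)) * h := by rw [mv]
    _ = σ₂ * σ₁ * σ₂^(2*(-m₁)) * (σ₂^(2*(2*m₁+1)*(-m₂)) * c^m₁)
        * (c^((2*m₁+1)*m₂) * g) * h := by rw [mv]
    _ = σ₂ * σ₁ * σ₂^(2*(-(2*m₁*m₂+m₁+m₂))) * c^(2*m₁*m₂+m₁+m₂) * (g*h) := by group

section HexComp

variable {N₁ N₂ : Subgroup B3} [N₁.Normal] [N₂.Normal] {m₁ m₂ : ℤ} {f₁ f₂ : F2}
  {T₁ : B3 →* B3 ⧸ N₁}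

theorem hex_comp (hex₁ : Hex N₁ m₁ f₁)
    (h11 : T₁ σ₁ = QuotientGroup.mk' N₁ (σ₁ ^ (2*m₁+1)))
    (h12 : T₁ σ₂ = QuotientGroup.mk' N₁ ((ι f₁)⁻¹ * σ₂ ^ (2*m₁+1) * ι f₁))
    (hker : T₁.ker = N₂) (hex₂ : Hex N₂ m₂ f₂) :
    Hex N₁ (2*m₁*m₂+m₁+m₂) (f₁ * Emap m₁ f₁ f₂) := by
  constructor
  · -- hexagon 1
    have e1 : T₁ (σ₁^(2*m₂+1) * (ι f₂)⁻¹ * σ₂^(2*m₂+1) * ι f₂)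
        = QuotientGroup.mk' N₁ (σ₁ ^ (2*(2*m₁*m₂+m₁+m₂)+1) * (ι (f₁ * Emap m₁ f₁ f₂))⁻¹
            * σ₂ ^ (2*(2*m₁*m₂+m₁+m₂)+1) * ι (f₁ * Emap m₁ f₁ f₂)) := by
      rw [map_mul T₁, map_mul T₁, map_mul T₁, map_inv T₁, map_zpow T₁, map_zpow T₁, h11, h12,
        T_iota h11 h12]
      rw [← map_zpow, ← map_zpow, ← map_inv, ← map_mul, ← map_mul, ← map_mul]
      apply congrArg
      rw [map_mul ι, conj_zpow', ← zpow_mul, ← zpow_mul]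
      group
    have e2 : T₁ ((ι f₂)⁻¹ * σ₁ * σ₂ * (σ₁^2)^(-m₂) * c^m₂)
        = QuotientGroup.mk' N₁ ((ι (f₁ * Emap m₁ f₁ f₂))⁻¹ * σ₁ * σ₂
            * (σ₁^2)^(-(2*m₁*m₂+m₁+m₂)) * c^(2*m₁*m₂+m₁+m₂)) := by
      rw [show (ι f₂)⁻¹ * σ₁ * σ₂ * (σ₁^2)^(-m₂) * c^m₂
          = (ι f₂)⁻¹ * ((σ₁ * σ₂) * ((σ₁^2)^(-m₂) * c^m₂)) from by group]
      rw [map_mul T₁, map_mul T₁, map_mul T₁, map_mul T₁, map_inv T₁, map_zpow T₁,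
        map_zpow T₁, ← map_mul T₁ σ₁ σ₂, T_s12 hex₁ h11 h12, map_pow T₁, h11,
        T_iota h11 h12, T_c hex₁ h11 h12]
      rw [← map_pow, ← map_zpow, ← map_zpow, ← map_inv, ← map_mul, ← map_mul, ← map_mul]
      apply congrArg
      rw [map_mul ι, ← wordA m₁ m₂ (ι f₁) (ι (Emap m₁ f₁ f₂))]
      group
    rw [← e1, ← e2]
    exact T_congr hker hex₂.1
  · -- hexagon 2
    have e1 : T₁ ((ι f₂)⁻¹ * σ₂^(2*m₂+1) * ι f₂ * σ₁^(2*m₂+1))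
        = QuotientGroup.mk' N₁ ((ι (f₁ * Emap m₁ f₁ f₂))⁻¹ * σ₂ ^ (2*(2*m₁*m₂+m₁+m₂)+1)
            * ι (f₁ * Emap m₁ f₁ f₂) * σ₁ ^ (2*(2*m₁*m₂+m₁+m₂)+1)) := by
      rw [map_mul T₁, map_mul T₁, map_mul T₁, map_inv T₁, map_zpow T₁, map_zpow T₁, h11, h12,
        T_iota h11 h12]
      rw [← map_zpow, ← map_zpow, ← map_inv, ← map_mul, ← map_mul, ← map_mul]
      apply congrArg
      rw [map_mul ι, conj_zpow', ← zpow_mul, ← zpow_mul]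
      group
    have e2 : T₁ (σ₂ * σ₁ * (σ₂^2)^(-m₂) * c^m₂ * ι f₂)
        = QuotientGroup.mk' N₁ (σ₂ * σ₁ * (σ₂^2)^(-(2*m₁*m₂+m₁+m₂)) * c^(2*m₁*m₂+m₁+m₂)
            * ι (f₁ * Emap m₁ f₁ f₂)) := by
      rw [show σ₂ * σ₁ * (σ₂^2)^(-m₂) * c^m₂ * ι f₂
          = (σ₂ * σ₁) * ((σ₂^2)^(-m₂) * (c^m₂ * ι f₂)) from by group]
      rw [map_mul T₁, map_mul T₁, map_mul T₁, map_mul T₁, map_zpow T₁, map_zpow T₁,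
        ← map_mul T₁ σ₂ σ₁, T_s21 hex₁ h11 h12, map_pow T₁, h12,
        T_iota h11 h12, T_c hex₁ h11 h12]
      rw [← map_pow, ← map_zpow, ← map_zpow, ← map_mul, ← map_mul, ← map_mul]
      apply congrArg
      rw [map_mul ι, ← wordB m₁ m₂ (ι f₁) (ι (Emap m₁ f₁ f₂))]
      group
    rw [← e1, ← e2]
    exact T_congr hker hex₂.2

end HexComp


/-! ### existence of the inverse's f-part -/

theorem inv_f_exists {K N : Subgroup B3} [K.Normal] [N.Normal]
    [Finite (B3 ⧸ N)] [Finite (B3 ⧸ K)]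
    (hK : K ≤ PB3) (hN : N ≤ PB3) {m : ℤ} {f : F2} {T : B3 →* B3 ⧸ N}
    (h1 : T σ₁ = QuotientGroup.mk' N (σ₁ ^ (2*m+1)))
    (h2 : T σ₂ = QuotientGroup.mk' N ((ι f)⁻¹ * σ₂ ^ (2*m+1) * ι f))
    (hex : Hex N m f) (hsurj : Function.Surjective T) (hker : T.ker = K)
    (hcomm : ∃ g ∈ commutator F2, g⁻¹ * f ∈ N.comap ι) :
    ∃ γ ∈ commutator F2, T (ι γ) = (QuotientGroup.mk' N (ι f))⁻¹ := by
  have hcompTθ : (liftT T hker).comp (QuotientGroup.mk' K) = T :=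
    MonoidHom.ext (liftT_mk hker)
  have hXmap : Subgroup.map T PB3
      = Subgroup.map (liftT T hker) (Subgroup.map (QuotientGroup.mk' K) PB3) := by
    rw [Subgroup.map_map, hcompTθ]
  have hbij : Function.Bijective (liftT T hker) := ⟨liftT_inj hker, liftT_surj hker hsurj⟩
  have hcardQ : Nat.card (B3 ⧸ K) = Nat.card (B3 ⧸ N) := Nat.card_eq_of_bijective _ hbij
  haveI hNfi : N.FiniteIndex := Subgroup.finiteIndex_of_finite_quotient
  haveI hPfi : PB3.FiniteIndex := Subgroup.finiteIndex_of_le hN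
  have hPidx : PB3.index ≠ 0 := hPfi.index_ne_zero
  have hidxK : (Subgroup.map (QuotientGroup.mk' K) PB3).index = PB3.index :=
    Subgroup.index_map_eq _ (QuotientGroup.mk'_surjective K)
      (by rw [QuotientGroup.ker_mk']; exact hK)
  have hidxN : (Subgroup.map (QuotientGroup.mk' N) PB3).index = PB3.index :=
    Subgroup.index_map_eq _ (QuotientGroup.mk'_surjective N)
      (by rw [QuotientGroup.ker_mk']; exact hN)
  have hcard1 : Nat.card (Subgroup.map (QuotientGroup.mk' K) PB3)
      = Nat.card (Subgroup.map (QuotientGroup.mk' N) PB3) := by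
    have e1 := Subgroup.card_mul_index (Subgroup.map (QuotientGroup.mk' K) PB3)
    have e2 := Subgroup.card_mul_index (Subgroup.map (QuotientGroup.mk' N) PB3)
    rw [hidxK, hcardQ] at e1
    rw [hidxN] at e2
    exact Nat.eq_of_mul_eq_mul_right (Nat.pos_of_ne_zero hPidx) (e1.trans e2.symm)
  have hcardX : Nat.card (Subgroup.map T PB3)
      = Nat.card (Subgroup.map (QuotientGroup.mk' N) PB3) := by
    rw [hXmap, ← hcard1]
    exact (Nat.card_congr (Subgroup.equivMapOfInjective _ _ (liftT_inj hker)).toEquiv).symm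
  have hσ₁PB3 : σ₁ ^ 2 ∈ PB3 := PB3_eq_H3 ▸ aH
  have hσ₂PB3 : σ₂ ^ 2 ∈ PB3 := PB3_eq_H3 ▸ bH
  have hcPB3 : c ∈ PB3 := PB3_eq_H3 ▸ cH
  have hTσ₁2 : T (σ₁ ^ 2) = QuotientGroup.mk' N ((σ₁ ^ 2) ^ (2*m+1 : ℤ)) := by
    rw [map_pow, h1, ← map_pow]
    apply congrArg
    rw [z_sq, sq_z]
  have hTσ₂2 : T (σ₂ ^ 2) = QuotientGroup.mk' N ((ι f)⁻¹ * (σ₂ ^ 2) ^ (2*m+1 : ℤ) * ι f) := by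
    rw [map_pow, h2, ← map_pow]
    apply congrArg
    rw [conj_pow2, z_sq, sq_z]
  have hXY : Subgroup.map T PB3 ≤ Subgroup.map (QuotientGroup.mk' N) PB3 := by
    nth_rewrite 1 [PB3_eq_H3, H3]
    rw [MonoidHom.map_closure]
    refine (Subgroup.closure_le _).mpr ?_
    rintro x ⟨y, hy, rfl⟩
    simp only [Set.mem_insert_iff, Set.mem_singleton_iff] at hy
    rcases hy with rfl | rfl | rfl
    · rw [hTσ₁2]
      exact Subgroup.mem_map_of_mem _ (Subgroup.zpow_mem _ hσ₁PB3 _)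
    · rw [hTσ₂2]
      exact Subgroup.mem_map_of_mem _
        (mul_mem (mul_mem (inv_mem (ι_mem_PB3 f)) (Subgroup.zpow_mem _ hσ₂PB3 _)) (ι_mem_PB3 f))
    · rw [T_c hex h1 h2]
      exact Subgroup.mem_map_of_mem _ (Subgroup.zpow_mem _ hcPB3 _)
  have hXeq : Subgroup.map T PB3 = Subgroup.map (QuotientGroup.mk' N) PB3 :=
    sub_eq_of_le_card hXY (le_of_eq hcardX.symm)
  have hzc : ∀ w : B3 ⧸ N, (QuotientGroup.mk' N (c ^ (2*m+1 : ℤ))) * w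
      = w * QuotientGroup.mk' N (c ^ (2*m+1 : ℤ)) := by
    intro w
    induction w using QuotientGroup.induction_on with
    | H x =>
      show QuotientGroup.mk' N (c ^ (2*m+1:ℤ)) * QuotientGroup.mk' N x
        = QuotientGroup.mk' N x * QuotientGroup.mk' N (c ^ (2*m+1:ℤ))
      rw [← map_mul, ← map_mul]
      exact congrArg _ ((Commute.zpow_left (c_central x) _).eq)
  have hdecomp : ∀ y ∈ Subgroup.map (QuotientGroup.mk' N) PB3,
      ∃ s ∈ (T.comp ι).range, ∃ z : B3 ⧸ N, (∀ w, z * w = w * z) ∧ y = s * z := by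
    intro y hy
    rw [← hXeq] at hy
    nth_rewrite 1 [PB3_eq_H3, H3] at hy
    rw [MonoidHom.map_closure] at hy
    induction hy using Subgroup.closure_induction with
    | mem x hx =>
      obtain ⟨y', hy', rfl⟩ := hx
      simp only [Set.mem_insert_iff, Set.mem_singleton_iff] at hy'
      rcases hy' with rfl | rfl | rfl
      · exact ⟨T (σ₁ ^ 2), ⟨xx, by rw [MonoidHom.comp_apply, ιx]⟩, 1,
          fun w => by rw [one_mul, mul_one], (mul_one _).symm⟩
      · exact ⟨T (σ₂ ^ 2), ⟨yy, by rw [MonoidHom.comp_apply, ιy]⟩, 1,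
          fun w => by rw [one_mul, mul_one], (mul_one _).symm⟩
      · exact ⟨1, one_mem _, T c, by rw [T_c hex h1 h2]; exact hzc, (one_mul _).symm⟩
    | one => exact ⟨1, one_mem _, 1, fun w => by rw [one_mul, mul_one], (mul_one _).symm⟩
    | mul a b _ _ ha hb =>
      obtain ⟨s, hs, z, hz, rfl⟩ := ha
      obtain ⟨s', hs', z', hz', rfl⟩ := hb
      refine ⟨s * s', mul_mem hs hs', z * z', ?_, ?_⟩
      · intro w
        calc (z*z')*w = z*(z'*w) := by group
          _ = z*(w*z') := by rw [hz' w]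
          _ = (z*w)*z' := by group
          _ = (w*z)*z' := by rw [hz w]
          _ = w*(z*z') := by group
      · calc (s*z)*(s'*z') = s*(z*s')*z' := by group
          _ = s*(s'*z)*z' := by rw [hz s']
          _ = s*s'*(z*z') := by group
    | inv a _ ha =>
      obtain ⟨s, hs, z, hz, rfl⟩ := ha
      have hzinv : ∀ w, z⁻¹ * w = w * z⁻¹ := by
        intro w
        calc z⁻¹*w = z⁻¹*(w*z)*z⁻¹ := by group
          _ = z⁻¹*(z*w)*z⁻¹ := by rw [hz w]
          _ = w*z⁻¹ := by group
      refine ⟨s⁻¹, inv_mem hs, z⁻¹, hzinv, ?_⟩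
      calc (s*z)⁻¹ = z⁻¹*s⁻¹ := by group
        _ = s⁻¹*z⁻¹ := hzinv s⁻¹
  obtain ⟨g₀, hg₀, hn₀⟩ := hcomm
  have hn₀' : ι (g₀⁻¹ * f) ∈ N := hn₀
  have hbA : QuotientGroup.mk' N (ι f) = ((QuotientGroup.mk' N).comp ι) g₀ := by
    have hf : f = g₀ * (g₀⁻¹ * f) := by group
    rw [MonoidHom.comp_apply]
    conv_lhs => rw [hf]
    rw [map_mul ι, map_mul]
    have hone : QuotientGroup.mk' N (ι (g₀⁻¹ * f)) = 1 := (QuotientGroup.eq_one_iff _).mpr hn₀'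
    rw [hone, mul_one]
  have hclaim : Subgroup.map ((QuotientGroup.mk' N).comp ι) (commutator F2)
      ≤ Subgroup.map (T.comp ι) (commutator F2) := by
    rw [commutator_def, Subgroup.map_commutator, Subgroup.map_commutator,
      ← MonoidHom.range_eq_map, ← MonoidHom.range_eq_map]
    refine Subgroup.commutator_le.mpr ?_
    rintro p ⟨u, rfl⟩ q ⟨v, rfl⟩
    have hu' : ((QuotientGroup.mk' N).comp ι) u ∈ Subgroup.map (QuotientGroup.mk' N) PB3 :=
      Subgroup.mem_map_of_mem _ (ι_mem_PB3 u)
    have hv' : ((QuotientGroup.mk' N).comp ι) v ∈ Subgroup.map (QuotientGroup.mk' N) PB3 :=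
      Subgroup.mem_map_of_mem _ (ι_mem_PB3 v)
    obtain ⟨s, hs, z, hz, he⟩ := hdecomp _ hu'
    obtain ⟨s', hs', z', hz', he'⟩ := hdecomp _ hv'
    rw [he, he', comm_central hz hz']
    exact Subgroup.commutator_mem_commutator hs hs'
  have hbW : (QuotientGroup.mk' N (ι f))⁻¹ ∈ Subgroup.map (T.comp ι) (commutator F2) := by
    apply Subgroup.inv_mem
    apply hclaim
    rw [hbA]
    exact Subgroup.mem_map_of_mem _ hg₀
  obtain ⟨γ, hγmem, hγeq⟩ := hbW
  exact ⟨γ, hγmem, hγeq⟩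


theorem wordD (m m' : ℤ) (g : B3) :
    g * ((g⁻¹*σ₁*σ₂*(σ₁^2)^(-m)*c^m) * ((((σ₁^(2*m+1))^(2:ℕ))^(-m')) * ((c^(2*m+1))^(m'))))
    = σ₁ * σ₂ * ((σ₁^2)^(-(2*m*m'+m+m')) * c^(2*m*m'+m+m')) := by
  rw [z_sq, ← zpow_mul σ₁, ← zpow_mul c, sq_z, sq_z]
  calc g * ((g⁻¹*σ₁*σ₂*σ₁^(2*(-m))*c^m) * (σ₁^(2*(2*m+1)*(-m')) * c^((2*m+1)*m')))
      = σ₁*σ₂*σ₁^(2*(-m)) * (c^m * σ₁^(2*(2*m+1)*(-m'))) * c^((2*m+1)*m') := by group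
    _ = σ₁*σ₂*σ₁^(2*(-m)) * (σ₁^(2*(2*m+1)*(-m')) * c^m) * c^((2*m+1)*m') := by rw [mv]
    _ = σ₁ * σ₂ * (σ₁^(2*(-(2*m*m'+m+m'))) * c^(2*m*m'+m+m')) := by group

theorem wordE (m m' : ℤ) (g : B3) :
    (σ₂*σ₁*(σ₂^2)^(-m)*c^m*g) * ((((g⁻¹*σ₂^(2*m+1)*g)^(2:ℕ))^(-m')) * ((c^(2*m+1))^(m') * g⁻¹))
    = σ₂ * σ₁ * ((σ₂^2)^(-(2*m*m'+m+m')) * c^(2*m*m'+m+m')) := by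
  rw [conj_pow2, z_sq, conj_zpow', ← zpow_mul σ₂, ← zpow_mul c, sq_z, sq_z]
  calc (σ₂*σ₁*σ₂^(2*(-m))*c^m*g) * ((g⁻¹ * σ₂^(2*(2*m+1)*(-m')) * g) * (c^((2*m+1)*m') * g⁻¹))
      = σ₂*σ₁*σ₂^(2*(-m)) * (c^m * σ₂^(2*(2*m+1)*(-m'))) * (g * c^((2*m+1)*m') * g⁻¹) := by
        group
    _ = σ₂*σ₁*σ₂^(2*(-m)) * (σ₂^(2*(2*m+1)*(-m')) * c^m) * (g * c^((2*m+1)*m') * g⁻¹) := by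
        rw [mv]
    _ = σ₂*σ₁*σ₂^(2*(-m)) * (σ₂^(2*(2*m+1)*(-m')) * c^m) * (c^((2*m+1)*m') * g * g⁻¹) := by
        rw [← mv ((2*m+1)*m') g]
    _ = σ₂ * σ₁ * (σ₂^(2*(-(2*m*m'+m+m'))) * c^(2*m*m'+m+m')) := by group

/-- GT-shadows form a groupoid: composition of composable GT-shadows is a GT-shadow,
[0,1] is the identity morphism at every object, and every GT-shadow
[m,f] ∈ GTSh(K,N) has an inverse [m̃,f̃] ∈ GTSh(N,K) determined by
(2m+1)(2m̃+1) ≡ 1 mod 2N_ord and T^{F₂,isom}_{m,f}(f̃ K_{F₂}) = f⁻¹N_{F₂}. -/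
theorem GTSh_groupoid :
    -- composition
    (∀ (N₁ N₂ N₃ : Subgroup B3) [N₁.Normal] [N₂.Normal] [N₃.Normal],
      N₁ ≤ PB3 → N₂ ≤ PB3 → N₃ ≤ PB3 →
      N₁.FiniteIndex → N₂.FiniteIndex → N₃.FiniteIndex →
      ∀ (m₁ m₂ : ℤ) (f₁ f₂ : F2),
        IsShadow N₂ N₁ m₁ f₁ → IsShadow N₃ N₂ m₂ f₂ →
        IsShadow N₃ N₁ (2 * m₁ * m₂ + m₁ + m₂) (f₁ * Emap m₁ f₁ f₂)) ∧
    -- identity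
    (∀ (N : Subgroup B3) [N.Normal], N ≤ PB3 → N.FiniteIndex →
      IsShadow N N 0 1) ∧
    -- inverses
    (∀ (K N : Subgroup B3) [K.Normal] [N.Normal],
      K ≤ PB3 → N ≤ PB3 → K.FiniteIndex → N.FiniteIndex →
      ∀ (m : ℤ) (f : F2) (T : B3 →* B3 ⧸ N),
        Hex N m f →
        T σ₁ = QuotientGroup.mk' N (σ₁ ^ (2 * m + 1)) →
        T σ₂ = QuotientGroup.mk' N ((ι f)⁻¹ * σ₂ ^ (2 * m + 1) * ι f) →
        Function.Surjective T → T.ker = K →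
        (∃ g ∈ commutator F2, g⁻¹ * f ∈ N.comap ι) →
        IsUnit ((2 * m + 1 : ℤ) : ZMod (Nord N)) →
        ∃ (m' : ℤ) (f' : F2),
          IsShadow N K m' f' ∧
          ((2 * (Nord N) : ℤ) ∣ ((2 * m + 1) * (2 * m' + 1) - 1)) ∧
          T (ι f') = QuotientGroup.mk' N (ι f)⁻¹) := by
  refine ⟨?_, ?_, ?_⟩
  · -- composition
    intro N₁ N₂ N₃ i₁ i₂ i₃ hN₁ hN₂ hN₃ hfi₁ hfi₂ hfi₃ m₁ m₂ f₁ f₂ hS₁ hS₂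
    obtain ⟨hex₁, ⟨g₁, hg₁, hn₁⟩, hu₁, T₁, h11, h12, hs₁, hk₁⟩ := hS₁
    obtain ⟨hex₂, ⟨g₂, hg₂, hn₂⟩, hu₂, T₂, h21, h22, hs₂, hk₂⟩ := hS₂
    haveI := hfi₁
    haveI : Finite (B3 ⧸ N₁) := Subgroup.finite_quotient_of_finiteIndex
    refine ⟨hex_comp hex₁ h11 h12 hk₁ hex₂, ?_, ?_, ?_⟩
    · -- commutator condition
      refine ⟨g₁ * ((g₁⁻¹ * f₁) * Emap m₁ f₁ g₂ * (g₁⁻¹ * f₁)⁻¹), ?_, ?_⟩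
      · exact mul_mem hg₁
          (Subgroup.Normal.conj_mem inferInstance _ (hom_mem_commutator hg₂) (g₁⁻¹ * f₁))
      · have hkey : (g₁ * ((g₁⁻¹ * f₁) * Emap m₁ f₁ g₂ * (g₁⁻¹ * f₁)⁻¹))⁻¹
            * (f₁ * Emap m₁ f₁ f₂)
            = (g₁⁻¹ * f₁) * Emap m₁ f₁ (g₂⁻¹ * f₂) := by
          have hf₂ : f₂ = g₂ * (g₂⁻¹ * f₂) := by group
          conv_lhs => rw [hf₂]
          rw [map_mul (Emap m₁ f₁)]
          group
        rw [hkey]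
        have h5 : QuotientGroup.mk' N₁ (ι (Emap m₁ f₁ (g₂⁻¹ * f₂))) = 1 := by
          rw [← T_iota h11 h12]
          exact MonoidHom.mem_ker.mp (show ι (g₂⁻¹ * f₂) ∈ T₁.ker from hk₁.symm ▸ hn₂)
        exact mul_mem hn₁ (Subgroup.mem_comap.mpr ((QuotientGroup.eq_one_iff _).mp h5))
    · -- unit
      have hNord : Nord N₂ = Nord N₁ := nord_eq h11 h12 hex₁ hk₁ hu₁
      have he : (2*(2*m₁*m₂+m₁+m₂)+1 : ℤ) = (2*m₁+1)*(2*m₂+1) := by ring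
      rw [he, Int.cast_mul]
      exact hu₁.mul (by rw [← hNord]; exact hu₂)
    · -- the homomorphism
      refine ⟨(liftT T₁ hk₁).comp T₂, ?_, ?_, ?_, ?_⟩
      · show (liftT T₁ hk₁) (T₂ σ₁) = _
        rw [h21, liftT_mk, map_zpow, h11, ← map_zpow, ← zpow_mul]
        exact congrArg _ (zpc σ₁ (by ring))
      · show (liftT T₁ hk₁) (T₂ σ₂) = _
        rw [h22, liftT_mk, map_mul T₁, map_mul T₁, map_inv, map_zpow, h12,
          T_iota h11 h12]
        rw [← map_zpow, ← map_inv, ← map_mul, ← map_mul]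
        apply congrArg
        rw [map_mul ι, conj_zpow', ← zpow_mul]
        group
      · exact (liftT_surj hk₁ hs₁).comp hs₂
      · ext x
        rw [MonoidHom.mem_ker, MonoidHom.comp_apply]
        constructor
        · intro hx
          have hx2 : T₂ x = 1 := (injective_iff_map_eq_one _).mp (liftT_inj hk₁) _ hx
          exact hk₂ ▸ MonoidHom.mem_ker.mpr hx2
        · intro hx
          have hx2 : T₂ x = 1 := MonoidHom.mem_ker.mp (hk₂.symm ▸ hx)
          rw [hx2, map_one]
  · -- identity
    intro N iN hN hfi
    refine ⟨⟨?_, ?_⟩, ⟨1, one_mem _, by simpa using (N.comap ι).one_mem⟩, ?_,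
      QuotientGroup.mk' N, ?_, ?_, QuotientGroup.mk'_surjective N, QuotientGroup.ker_mk' N⟩
    · apply congrArg
      rw [map_one]
      norm_num
    · apply congrArg
      rw [map_one]
      norm_num
    · norm_num
    · apply congrArg
      norm_num
    · apply congrArg
      rw [map_one]
      norm_num
  · -- inverses
    intro K N iK iN hK hN hKfi hNfi m f T hex h1 h2 hsurj hker hcomm hu
    haveI := hNfi
    haveI := hKfi
    haveI : Finite (B3 ⧸ N) := Subgroup.finite_quotient_of_finiteIndex
    haveI : Finite (B3 ⧸ K) := Subgroup.finite_quotient_of_finiteIndex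
    have hnz : Nord N ≠ 0 := nord_ne_zero N
    have hcop : Nat.Coprime (2*m+1).natAbs (Nord N) := int_isUnit_coprime hnz hu
    have hoddc : Nat.Coprime (2*m+1).natAbs 2 := by
      have hodd : Odd ((2*m+1 : ℤ).natAbs) := Int.natAbs_odd.mpr ⟨m, by ring⟩
      refine Nat.Coprime.symm ((Nat.Prime.coprime_iff_not_dvd Nat.prime_two).mpr ?_)
      intro hdvd
      have := Nat.odd_iff.mp hodd
      omega
    have hcop2 : Nat.Coprime (2*m+1).natAbs (2 * Nord N) := Nat.Coprime.mul_right hoddc hcop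
    haveI : NeZero (2 * Nord N) := ⟨mul_ne_zero two_ne_zero hnz⟩
    have hu2 : IsUnit ((2*m+1 : ℤ) : ZMod (2 * Nord N)) := by
      have hna : IsUnit (((2*m+1 : ℤ).natAbs : ZMod (2 * Nord N))) :=
        (ZMod.isUnit_iff_coprime _ _).mpr hcop2
      rcases Int.natAbs_eq (2*m+1) with h | h
      · rw [h, Int.cast_natCast]; exact hna
      · rw [h, Int.cast_neg, Int.cast_natCast]; exact hna.neg
    obtain ⟨w, hw⟩ := hu2
    set u : ℤ := (((w⁻¹ : (ZMod (2 * Nord N))ˣ) : ZMod (2 * Nord N)).val : ℤ) with hu_def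
    have hu' : ((u : ℤ) : ZMod (2 * Nord N)) = ((w⁻¹ : (ZMod (2 * Nord N))ˣ) : ZMod (2 * Nord N)) := by
      rw [hu_def, Int.cast_natCast]
      exact ZMod.natCast_rightInverse _
    have hdvd1 : ((2 * Nord N : ℕ) : ℤ) ∣ ((2*m+1) * u - 1) := by
      rw [← ZMod.intCast_zmod_eq_zero_iff_dvd, Int.cast_sub, Int.cast_mul, Int.cast_one,
        hu', ← hw]
      simp
    have h2dvd : (2:ℤ) ∣ ((2*m+1) * u - 1) :=
      dvd_trans ⟨(Nord N : ℤ), by push_cast; ring⟩ hdvd1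
    obtain ⟨m', hm'⟩ : ∃ m' : ℤ, u = 2*m'+1 := by
      obtain ⟨k, hk⟩ := h2dvd
      exact ⟨k - m*u, by linear_combination hk⟩
    have hdvd2 : (2 * (Nord N) : ℤ) ∣ ((2*m+1) * (2*m'+1) - 1) := by
      rw [← hm']
      have := hdvd1
      push_cast at this
      exact this
    obtain ⟨γ, hγcomm, hγeq⟩ := inv_f_exists hK hN h1 h2 hex hsurj hker hcomm
    have hNord : Nord K = Nord N := nord_eq h1 h2 hex hker hu
    have hbij : Function.Bijective (liftT T hker) := ⟨liftT_inj hker, liftT_surj hker hsurj⟩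
    set e : (B3 ⧸ K) ≃* (B3 ⧸ N) := MulEquiv.ofBijective _ hbij with he_def
    have he_mk : ∀ x : B3, e (QuotientGroup.mk' K x) = T x := fun x => liftT_mk hker x
    have hσ₁P : QuotientGroup.mk' N (σ₁ ^ ((2*m+1)*(2*m'+1))) = QuotientGroup.mk' N σ₁ :=
      q_sig_pow N σ₁ (ord1_dvd_nord N) hdvd2
    have hσ₂P : QuotientGroup.mk' N (σ₂ ^ ((2*m+1)*(2*m'+1))) = QuotientGroup.mk' N σ₂ :=
      q_sig_pow N σ₂ (ord2_dvd_nord N) hdvd2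
    have hTσ₁P : T (σ₁ ^ (2*m'+1 : ℤ)) = QuotientGroup.mk' N σ₁ := by
      rw [map_zpow, h1, ← map_zpow, ← zpow_mul]
      exact hσ₁P
    have hTσ₂P : T (σ₂ ^ (2*m'+1 : ℤ)) = QuotientGroup.mk' N ((ι f)⁻¹ * σ₂ * ι f) := by
      rw [map_zpow, h2, ← map_zpow, conj_zpow', ← zpow_mul, map_mul, map_mul, map_inv, hσ₂P,
        ← map_inv, ← map_mul, ← map_mul]
    have hTσ₁sq : T (σ₁^2) = QuotientGroup.mk' N ((σ₁^(2*m+1))^(2:ℕ)) := by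
      rw [map_pow, h1, ← map_pow]
    have hTσ₂sq : T (σ₂^2) = QuotientGroup.mk' N (((ι f)⁻¹ * σ₂^(2*m+1) * ι f)^(2:ℕ)) := by
      rw [map_pow, h2, ← map_pow]
    obtain ⟨t, ht⟩ := id hdvd2
    have hsd : (2*m*m'+m+m' : ℤ) = (Nord N : ℤ) * t := by linarith
    have hz1 : (QuotientGroup.mk' N (σ₁^2)) ^ (-(2*m*m'+m+m') : ℤ) = 1 :=
      zpow_one_of_dvd (ord1_dvd_nord N) (by rw [hsd]; exact (dvd_mul_right _ _).neg_right)
    have hz2 : (QuotientGroup.mk' N (σ₂^2)) ^ (-(2*m*m'+m+m') : ℤ) = 1 :=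
      zpow_one_of_dvd (ord2_dvd_nord N) (by rw [hsd]; exact (dvd_mul_right _ _).neg_right)
    have hzc : (QuotientGroup.mk' N c) ^ (2*m*m'+m+m' : ℤ) = 1 :=
      zpow_one_of_dvd (ordc_dvd_nord N) (by rw [hsd]; exact dvd_mul_right _ _)
    refine ⟨m', γ, ⟨⟨?_, ?_⟩, ⟨γ, hγcomm, by simpa using (K.comap ι).one_mem⟩, ?_,
      e.symm.toMonoidHom.comp (QuotientGroup.mk' N), ?_, ?_, ?_, ?_⟩, hdvd2, hγeq⟩
    · -- hexagon 1 for the inverse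
      apply hbij.1
      rw [liftT_mk hker, liftT_mk hker]
      have eL : T (σ₁ ^ (2*m'+1) * (ι γ)⁻¹ * σ₂ ^ (2*m'+1) * ι γ)
          = QuotientGroup.mk' N (σ₁ * σ₂) := by
        rw [map_mul, map_mul, map_mul, map_inv, hγeq, hTσ₁P, hTσ₂P, inv_inv]
        simp only [map_mul, map_inv]
        group
      have eR : T ((ι γ)⁻¹ * σ₁ * σ₂ * (σ₁^2)^(-m') * c^m')
          = QuotientGroup.mk' N (σ₁ * σ₂) := by
        rw [show (ι γ)⁻¹ * σ₁ * σ₂ * (σ₁^2)^(-m') * c^(m')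
            = (ι γ)⁻¹ * ((σ₁*σ₂) * ((σ₁^2)^(-m') * c^(m'))) from by group]
        rw [map_mul T, map_mul T, map_mul T, map_mul T, map_inv T, map_zpow T, map_zpow T,
          hγeq, inv_inv, ← map_mul T σ₁ σ₂, T_s12 hex h1 h2, hTσ₁sq, T_c hex h1 h2]
        rw [← map_zpow (QuotientGroup.mk' N), ← map_zpow (QuotientGroup.mk' N),
          ← map_mul (QuotientGroup.mk' N), ← map_mul (QuotientGroup.mk' N),
          ← map_mul (QuotientGroup.mk' N)]
        rw [congrArg (QuotientGroup.mk' N) (wordD m m' (ι f))]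
        simp only [map_mul, map_zpow]
        rw [hz1, hzc]
        group
      rw [eL, eR]
    · -- hexagon 2 for the inverse
      apply hbij.1
      rw [liftT_mk hker, liftT_mk hker]
      have eL : T ((ι γ)⁻¹ * σ₂ ^ (2*m'+1) * ι γ * σ₁ ^ (2*m'+1))
          = QuotientGroup.mk' N (σ₂ * σ₁) := by
        rw [map_mul, map_mul, map_mul, map_inv, hγeq, hTσ₁P, hTσ₂P, inv_inv]
        simp only [map_mul, map_inv]
        group
      have eR : T (σ₂ * σ₁ * (σ₂^2)^(-m') * c^m' * ι γ)
          = QuotientGroup.mk' N (σ₂ * σ₁) := by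
        rw [show σ₂ * σ₁ * (σ₂^2)^(-m') * c^(m') * ι γ
            = (σ₂*σ₁) * ((σ₂^2)^(-m') * (c^(m') * ι γ)) from by group]
        rw [map_mul T, map_mul T, map_mul T, map_mul T, map_zpow T, map_zpow T,
          hγeq, ← map_mul T σ₂ σ₁, T_s21 hex h1 h2, hTσ₂sq, T_c hex h1 h2]
        rw [← map_inv (QuotientGroup.mk' N), ← map_zpow (QuotientGroup.mk' N),
          ← map_zpow (QuotientGroup.mk' N), ← map_mul (QuotientGroup.mk' N),
          ← map_mul (QuotientGroup.mk' N), ← map_mul (QuotientGroup.mk' N)]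
        rw [congrArg (QuotientGroup.mk' N) (wordE m m' (ι f))]
        simp only [map_mul, map_zpow]
        rw [hz2, hzc]
        group
      rw [eL, eR]
    · -- unit
      rw [hNord]
      have hd : ((Nord N : ℕ) : ℤ) ∣ ((2*m+1)*(2*m'+1) - 1) :=
        dvd_trans ⟨2, by push_cast; ring⟩ hdvd2
      have hcast := (ZMod.intCast_zmod_eq_zero_iff_dvd ((2*m+1)*(2*m'+1) - 1) (Nord N)).mpr hd
      push_cast at hcast
      refine IsUnit.of_mul_eq_one (((2*m+1 : ℤ) : ZMod (Nord N))) ?_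
      push_cast
      linear_combination hcast
    · -- T' σ₁
      show e.symm (QuotientGroup.mk' N σ₁) = _
      rw [MulEquiv.symm_apply_eq, he_mk]
      exact hTσ₁P.symm
    · -- T' σ₂
      show e.symm (QuotientGroup.mk' N σ₂) = _
      rw [MulEquiv.symm_apply_eq, he_mk]
      have : T ((ι γ)⁻¹ * σ₂ ^ (2*m'+1) * ι γ) = QuotientGroup.mk' N σ₂ := by
        rw [map_mul, map_mul, map_inv, hγeq, hTσ₂P, inv_inv]
        simp only [map_mul, map_inv]
        group
      exact this.symm
    · -- surjectivity
      exact e.symm.surjective.comp (QuotientGroup.mk'_surjective N)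
    · -- kernel
      ext x
      rw [MonoidHom.mem_ker, MonoidHom.comp_apply]
      show e.symm (QuotientGroup.mk' N x) = 1 ↔ x ∈ N
      rw [MulEquiv.map_eq_one_iff]
      exact QuotientGroup.eq_one_iff x
end
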